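/- arXiv:2312.02631 — 11 statements merged into one kernel-verified Lean document; each statement's English description precedes it below -/
import Mathlib

section
/- Let a, b > 0 with ab < 1. There exists a unique θ₀ ∈ (0, π/2) such that A sin(2θ₀ − 2τ) = μ + (1−μ) sin²θ₀ and 2A cos(2θ₀ − 2τ) = (1−μ) sin 2θ₀; it is characterized by cos 2θ₀ = ((1−μ) − 2A sin 2τ)/(1+μ) and sin 2θ₀ = 2A cos 2τ/(1+μ). -/
open MeasureTheory Real Set

noncomputable def fourierT (f : ℝ → ℂ) (ξ : ℝ) : ℂ :=
  (1 / Real.sqrt (2 * Real.pi) : ℝ) * ∫ x : ℝ, f x * Complex.exp (-(Complex.I * (ξ : ℂ) * (x : ℂ)))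

noncomputable def bargmann (f : ℝ → ℂ) (w : ℂ) : ℂ :=
  (Complex.exp (-w ^ 2 / 4) / (Real.sqrt Real.pi : ℂ)) *
    ∫ x : ℝ, Complex.exp ((x : ℂ) * w - (x : ℂ) ^ 2 / 2) * f x

def memE (a b : ℝ) (f : ℝ → ℂ) : Prop :=
  MeasureTheory.Integrable f ∧ ∃ C : ℝ,
    (∀ x : ℝ, ‖f x‖ ≤ C * Real.exp (-a * x ^ 2 / 2)) ∧
    (∀ ξ : ℝ, ‖fourierT f ξ‖ ≤ C * Real.exp (-b * ξ ^ 2 / 2))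

noncomputable def physHermite (n : ℕ) (x : ℝ) : ℝ :=
  (-1) ^ n * Real.exp (x ^ 2) * iteratedDeriv n (fun y => Real.exp (-y ^ 2)) x

noncomputable def hermiteFn (n : ℕ) (x : ℝ) : ℝ :=
  (Real.sqrt (2 ^ n * n.factorial * Real.sqrt Real.pi))⁻¹ * physHermite n x *
    Real.exp (-x ^ 2 / 2)

noncomputable def hermiteCoeff (f : ℝ → ℂ) (n : ℕ) : ℂ :=
  ∫ x : ℝ, f x * (hermiteFn n x : ℂ)

private lemma stmt3_aux (A μ τ : ℝ) (h1pμ : 0 < 1 + μ) (hApos : 0 < A)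
    (hCpos : 0 < Real.cos (2 * τ))
    (hpy : Real.sin (2 * τ) ^ 2 + Real.cos (2 * τ) ^ 2 = 1)
    (hkey : A ^ 2 - (1 - μ) * (A * Real.sin (2 * τ)) = μ) :
    ∃! θ₀ : ℝ, θ₀ ∈ Set.Ioo 0 (π / 2) ∧
      Real.cos (2 * θ₀) = ((1 - μ) - 2 * A * Real.sin (2 * τ)) / (1 + μ) ∧
      Real.sin (2 * θ₀) = 2 * A * Real.cos (2 * τ) / (1 + μ) := by
  set c₀ : ℝ := ((1 - μ) - 2 * A * Real.sin (2 * τ)) / (1 + μ) with hc₀def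
  set s₀ : ℝ := 2 * A * Real.cos (2 * τ) / (1 + μ) with hs₀def
  have hs₀pos : 0 < s₀ := by
    apply div_pos _ h1pμ
    positivity
  have hcs : c₀ ^ 2 + s₀ ^ 2 = 1 := by
    rw [hc₀def, hs₀def, div_pow, div_pow, ← add_div,
      div_eq_one_iff_eq (by positivity : (0:ℝ) < (1 + μ) ^ 2).ne']
    linear_combination (4 * A ^ 2) * hpy + 4 * hkey
  have hc₀lt : c₀ < 1 := by nlinarith [sq_nonneg c₀, sq_nonneg s₀, hs₀pos]
  have hc₀gt : -1 < c₀ := by nlinarith [sq_nonneg c₀, sq_nonneg s₀, hs₀pos]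
  have hπ : 0 < π := Real.pi_pos
  set φ : ℝ := Real.arccos c₀ with hφdef
  have hφpos : 0 < φ := Real.arccos_pos.mpr hc₀lt
  have hφlt : φ < π :=
    (Real.arccos_le_pi c₀).lt_of_ne (by
      intro h
      exact absurd (Real.arccos_eq_pi.mp h) (by linarith))
  have hcosφ : Real.cos φ = c₀ := Real.cos_arccos hc₀gt.le hc₀lt.le
  have hsinφ : Real.sin φ = s₀ := by
    rw [hφdef, Real.sin_arccos]
    have h1 : 1 - c₀ ^ 2 = s₀ ^ 2 := by linarith
    rw [h1]
    exact Real.sqrt_sq hs₀pos.le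
  have h2 : 2 * (φ / 2) = φ := by ring
  refine ⟨φ / 2, ⟨⟨by linarith, by linarith⟩, by rw [h2, hcosφ], by rw [h2, hsinφ]⟩, ?_⟩
  rintro y ⟨⟨hy1, hy2⟩, hyc, _⟩
  have h2y : (2 : ℝ) * y = φ :=
    Real.injOn_cos (⟨by linarith, by linarith⟩ : 2 * y ∈ Set.Icc 0 π)
      (⟨by linarith, by linarith⟩ : φ ∈ Set.Icc 0 π) (by rw [hyc, hcosφ])
  linarith

private lemma stmt3_main (A μ τ : ℝ) (h1pμ : 0 < 1 + μ)
    (hpy : Real.sin (2 * τ) ^ 2 + Real.cos (2 * τ) ^ 2 = 1)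
    (hkey : A ^ 2 - (1 - μ) * (A * Real.sin (2 * τ)) = μ) :
    ∀ θ : ℝ,
      ((A * Real.sin (2 * θ - 2 * τ) = μ + (1 - μ) * Real.sin θ ^ 2 ∧
        2 * A * Real.cos (2 * θ - 2 * τ) = (1 - μ) * Real.sin (2 * θ)) ↔
       (Real.cos (2 * θ) = ((1 - μ) - 2 * A * Real.sin (2 * τ)) / (1 + μ) ∧
        Real.sin (2 * θ) = 2 * A * Real.cos (2 * τ) / (1 + μ))) := by
  intro θ
  constructor
  · rintro ⟨E1, E2⟩
    rw [Real.sin_sub, Real.sin_sq, Real.cos_sq] at E1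
    rw [Real.cos_sub] at E2
    constructor
    · have key1 : (1 + μ) * ((1 + μ) * Real.cos (2 * θ)
          - ((1 - μ) - 2 * A * Real.sin (2 * τ))) = 0 := by
        linear_combination (-4 * (A * Real.sin (2 * τ) - (1 - μ) / 2)) * E1
          + (2 * A * Real.cos (2 * τ)) * E2
          + (-4 * Real.cos (2 * θ) * A ^ 2) * hpy + (-4 * Real.cos (2 * θ)) * hkey
      have h2 : (1 + μ) * Real.cos (2 * θ) - ((1 - μ) - 2 * A * Real.sin (2 * τ)) = 0 := by
        rcases mul_eq_zero.mp key1 with h | h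
        · exact absurd h h1pμ.ne'
        · exact h
      rw [eq_div_iff h1pμ.ne']
      linear_combination h2
    · have key2 : (1 + μ) * ((1 + μ) * Real.sin (2 * θ)
          - 2 * A * Real.cos (2 * τ)) = 0 := by
        linear_combination (4 * A * Real.cos (2 * τ)) * E1
          + (2 * (A * Real.sin (2 * τ) - (1 - μ) / 2)) * E2
          + (-4 * Real.sin (2 * θ) * A ^ 2) * hpy + (-4 * Real.sin (2 * θ)) * hkey
      have h2 : (1 + μ) * Real.sin (2 * θ) - 2 * A * Real.cos (2 * τ) = 0 := by
        rcases mul_eq_zero.mp key2 with h | h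
        · exact absurd h h1pμ.ne'
        · exact h
      rw [eq_div_iff h1pμ.ne']
      linear_combination h2
  · rintro ⟨hc, hs⟩
    have hs2 : Real.sin θ ^ 2 = 1 / 2 - Real.cos (2 * θ) / 2 := by
      rw [Real.sin_sq, Real.cos_sq]; ring
    constructor
    · rw [Real.sin_sub, hs2, hc, hs]
      field_simp
      linear_combination (4 * A ^ 2) * hpy + 4 * hkey
    · rw [Real.cos_sub, hc, hs]
      field_simp
      ring

theorem stmt3 (a b : ℝ) (ha : 0 < a) (hb : 0 < b) (hab : a * b < 1)
    (μ ν A τ : ℝ) (hμ : μ = (1 - a) / (1 + a)) (hν : ν = (1 - b) / (1 + b))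
    (hA : A = Real.sqrt ((a + b - 2 * a * b) / (a + b + 2 * a * b)))
    (hτ : τ ∈ Set.Ioo (-(π / 4)) (π / 4))
    (hτs : Real.sin (2 * τ)
      = (ν - μ) / Real.sqrt ((μ + ν - 2 * μ * ν) * (2 - μ - ν))) :
    (∃! θ₀ : ℝ, θ₀ ∈ Set.Ioo 0 (π / 2) ∧
      A * Real.sin (2 * θ₀ - 2 * τ) = μ + (1 - μ) * Real.sin θ₀ ^ 2 ∧
      2 * A * Real.cos (2 * θ₀ - 2 * τ) = (1 - μ) * Real.sin (2 * θ₀)) ∧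
    ∀ θ₀ ∈ Set.Ioo 0 (π / 2),
      ((A * Real.sin (2 * θ₀ - 2 * τ) = μ + (1 - μ) * Real.sin θ₀ ^ 2 ∧
        2 * A * Real.cos (2 * θ₀ - 2 * τ) = (1 - μ) * Real.sin (2 * θ₀)) ↔
       (Real.cos (2 * θ₀) = ((1 - μ) - 2 * A * Real.sin (2 * τ)) / (1 + μ) ∧
        Real.sin (2 * θ₀) = 2 * A * Real.cos (2 * τ) / (1 + μ))) := by
  obtain ⟨hτ1, hτ2⟩ := hτ
  have ha1 : (0:ℝ) < 1 + a := by linarith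
  have hb1 : (0:ℝ) < 1 + b := by linarith
  have hP : 0 < a + b - 2 * a * b := by nlinarith [sq_nonneg (a - b), mul_pos ha hb]
  have hQ : 0 < a + b + 2 * a * b := by nlinarith [mul_pos ha hb]
  have hDpos : 0 < (1 + a) * (1 + b) := mul_pos ha1 hb1
  have hsP : 0 < Real.sqrt (a + b - 2 * a * b) := Real.sqrt_pos.mpr hP
  have hsQ : 0 < Real.sqrt (a + b + 2 * a * b) := Real.sqrt_pos.mpr hQ
  have hApos : 0 < A := by rw [hA]; exact Real.sqrt_pos.mpr (div_pos hP hQ)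
  have hA2 : A ^ 2 = (a + b - 2 * a * b) / (a + b + 2 * a * b) := by
    rw [hA]; exact Real.sq_sqrt (div_nonneg hP.le hQ.le)
  have h1pμ : 0 < 1 + μ := by
    have h : 1 + μ = 2 / (1 + a) := by rw [hμ]; field_simp; ring
    rw [h]; positivity
  have h1mμ : 0 < 1 - μ := by
    have h : 1 - μ = 2 * a / (1 + a) := by rw [hμ]; field_simp; ring
    rw [h]; positivity
  -- value of sin 2τ
  have hnum : ν - μ = 2 * (a - b) / ((1 + a) * (1 + b)) := by
    rw [hμ, hν]; field_simp; ring
  have harg : (μ + ν - 2 * μ * ν) * (2 - μ - ν)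
      = (2 * Real.sqrt (a + b - 2 * a * b) * Real.sqrt (a + b + 2 * a * b)
          / ((1 + a) * (1 + b))) ^ 2 := by
    have e1 : Real.sqrt (a + b - 2 * a * b) ^ 2 = a + b - 2 * a * b := Real.sq_sqrt hP.le
    have e2 : Real.sqrt (a + b + 2 * a * b) ^ 2 = a + b + 2 * a * b := Real.sq_sqrt hQ.le
    rw [hμ, hν, div_pow, mul_pow, mul_pow, e1, e2]
    field_simp
    ring
  have hsq : Real.sqrt ((μ + ν - 2 * μ * ν) * (2 - μ - ν))
      = 2 * Real.sqrt (a + b - 2 * a * b) * Real.sqrt (a + b + 2 * a * b)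
          / ((1 + a) * (1 + b)) := by
    rw [harg]
    exact Real.sqrt_sq (div_nonneg (by positivity) hDpos.le)
  have hS : Real.sin (2 * τ)
      = (a - b) / (Real.sqrt (a + b - 2 * a * b) * Real.sqrt (a + b + 2 * a * b)) := by
    rw [hτs, hsq, hnum]
    field_simp
  have hQQ : Real.sqrt (a + b + 2 * a * b) * Real.sqrt (a + b + 2 * a * b)
      = a + b + 2 * a * b := Real.mul_self_sqrt hQ.le
  have hAS : A * Real.sin (2 * τ) = (a - b) / (a + b + 2 * a * b) := by
    rw [hA, hS, Real.sqrt_div hP.le]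
    rw [div_mul_div_comm, div_eq_div_iff (by positivity) hQ.ne']
    linear_combination (-(Real.sqrt (a + b - 2 * a * b) * (a - b))) * hQQ
  have hkey : A ^ 2 - (1 - μ) * (A * Real.sin (2 * τ)) = μ := by
    rw [hA2, hAS, hμ]
    field_simp
    ring
  have hpy : Real.sin (2 * τ) ^ 2 + Real.cos (2 * τ) ^ 2 = 1 := Real.sin_sq_add_cos_sq _
  have hCpos : 0 < Real.cos (2 * τ) :=
    Real.cos_pos_of_mem_Ioo ⟨by linarith, by linarith⟩
  have main := stmt3_main A μ τ h1pμ hpy hkey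
  refine ⟨?_, fun θ₀ _ => main θ₀⟩
  exact (existsUnique_congr (fun θ => and_congr_right fun _ => (main θ))).mpr
    (stmt3_aux A μ τ h1pμ hApos hCpos hpy hkey)
end

section
/- Let a, b > 0 with ab < 1. There exists a unique θ₁ ∈ (0, π/2) such that A sin(2θ₁ − 2τ) = ν + (1−ν) cos²θ₁ and 2A cos(2θ₁ − 2τ) = −(1−ν) sin 2θ₁; it is characterized by cos 2θ₁ = ((ν−1) − 2A sin 2τ)/(1+ν) and sin 2θ₁ = 2A cos 2τ/(1+ν). -/
open MeasureTheory Real Set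

theorem stmt4 (a b : ℝ) (ha : 0 < a) (hb : 0 < b) (hab : a * b < 1)
    (μ ν A τ : ℝ) (hμ : μ = (1 - a) / (1 + a)) (hν : ν = (1 - b) / (1 + b))
    (hA : A = Real.sqrt ((a + b - 2 * a * b) / (a + b + 2 * a * b)))
    (hτ : τ ∈ Set.Ioo (-(π / 4)) (π / 4))
    (hτs : Real.sin (2 * τ)
      = (ν - μ) / Real.sqrt ((μ + ν - 2 * μ * ν) * (2 - μ - ν))) :
    (∃! θ₁ : ℝ, θ₁ ∈ Set.Ioo 0 (π / 2) ∧
      A * Real.sin (2 * θ₁ - 2 * τ) = ν + (1 - ν) * Real.cos θ₁ ^ 2 ∧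
      2 * A * Real.cos (2 * θ₁ - 2 * τ) = -((1 - ν) * Real.sin (2 * θ₁))) ∧
    ∀ θ₁ ∈ Set.Ioo 0 (π / 2),
      ((A * Real.sin (2 * θ₁ - 2 * τ) = ν + (1 - ν) * Real.cos θ₁ ^ 2 ∧
        2 * A * Real.cos (2 * θ₁ - 2 * τ) = -((1 - ν) * Real.sin (2 * θ₁))) ↔
       (Real.cos (2 * θ₁) = ((ν - 1) - 2 * A * Real.sin (2 * τ)) / (1 + ν) ∧
        Real.sin (2 * θ₁) = 2 * A * Real.cos (2 * τ) / (1 + ν))) := by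
  have hπ := Real.pi_pos
  have hab0 : 0 < a * b := mul_pos ha hb
  have hQ : 0 < a + b + 2 * a * b := by nlinarith
  have hP : 0 < a + b - 2 * a * b := by
    nlinarith [sq_nonneg (a - b), mul_pos hab0 (sub_pos.2 hab), hQ]
  have ha1 : 0 < 1 + a := by linarith
  have hb1 : 0 < 1 + b := by linarith
  have hν1 : 0 < 1 + ν := by
    have h : 1 + ν = 2 / (1 + b) := by rw [hν]; field_simp; norm_num
    rw [h]; positivity
  have hD : 0 < (1 + a) * (1 + b) := mul_pos ha1 hb1
  have hsPQ : 0 < Real.sqrt ((a + b - 2 * a * b) * (a + b + 2 * a * b)) :=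
    Real.sqrt_pos.2 (mul_pos hP hQ)
  have hprod : (μ + ν - 2 * μ * ν) * (2 - μ - ν)
      = (2 / ((1 + a) * (1 + b))) ^ 2 * ((a + b - 2 * a * b) * (a + b + 2 * a * b)) := by
    rw [hμ, hν]; field_simp; ring
  have hdiff : ν - μ = 2 * (a - b) / ((1 + a) * (1 + b)) := by
    rw [hμ, hν]; field_simp; ring
  have hsqrtprod : Real.sqrt ((μ + ν - 2 * μ * ν) * (2 - μ - ν))
      = (2 / ((1 + a) * (1 + b))) * Real.sqrt ((a + b - 2 * a * b) * (a + b + 2 * a * b)) := by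
    rw [hprod, Real.sqrt_mul (sq_nonneg _), Real.sqrt_sq (by positivity)]
  have hsin : Real.sin (2 * τ) = (a - b) / Real.sqrt ((a + b - 2 * a * b) * (a + b + 2 * a * b)) := by
    rw [hτs, hdiff, hsqrtprod]
    field_simp
  have hA2 : A ^ 2 = (a + b - 2 * a * b) / (a + b + 2 * a * b) := by
    rw [hA]; exact Real.sq_sqrt (by positivity)
  have hA0 : 0 < A := by
    rw [hA]; exact Real.sqrt_pos.2 (div_pos hP hQ)
  have hAsin : A * Real.sin (2 * τ) = (a - b) / (a + b + 2 * a * b) := by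
    rw [hsin, hA, Real.sqrt_div hP.le, Real.sqrt_mul hP.le]
    have h1 : Real.sqrt (a + b - 2 * a * b) ≠ 0 := (Real.sqrt_pos.2 hP).ne'
    have h2 : Real.sqrt (a + b + 2 * a * b) ≠ 0 := (Real.sqrt_pos.2 hQ).ne'
    have h3 : Real.sqrt (a + b + 2 * a * b) * Real.sqrt (a + b + 2 * a * b)
        = a + b + 2 * a * b := Real.mul_self_sqrt hQ.le
    have h4 : Real.sqrt (a + b + 2 * a * b) ^ 2 = a + b + 2 * a * b := Real.sq_sqrt hQ.le
    field_simp
    rw [show a + b - a * b * 2 = a + b - 2 * a * b by ring, show a + b + a * b * 2 = a + b + 2 * a * b by ring, h4]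
    rw [mul_assoc, mul_div_assoc, mul_div_cancel₀ _ h1]
  have K : A ^ 2 + A * (1 - ν) * Real.sin (2 * τ) = ν := by
    have h : A * (1 - ν) * Real.sin (2 * τ) = (1 - ν) * ((a - b) / (a + b + 2 * a * b)) := by
      rw [mul_comm A (1 - ν), mul_assoc, hAsin]
    rw [hA2, h, hν]; field_simp; ring
  have hp : Real.sin (2 * τ) ^ 2 + Real.cos (2 * τ) ^ 2 = 1 := Real.sin_sq_add_cos_sq _
  have hCτ : 0 < Real.cos (2 * τ) := by
    obtain ⟨ht1, ht2⟩ := hτ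
    apply Real.cos_pos_of_mem_Ioo
    constructor
    · show -(π / 2) < 2 * τ; linarith
    · show 2 * τ < π / 2; linarith
  -- the key equivalence, valid for every θ
  have key : ∀ θ : ℝ,
      (A * Real.sin (2 * θ - 2 * τ) = ν + (1 - ν) * Real.cos θ ^ 2 ∧
        2 * A * Real.cos (2 * θ - 2 * τ) = -((1 - ν) * Real.sin (2 * θ))) ↔
      (Real.cos (2 * θ) = ((ν - 1) - 2 * A * Real.sin (2 * τ)) / (1 + ν) ∧
        Real.sin (2 * θ) = 2 * A * Real.cos (2 * τ) / (1 + ν)) := by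
    intro θ
    constructor
    · rintro ⟨e1, e2⟩
      rw [Real.sin_sub, Real.cos_sq] at e1
      rw [Real.cos_sub] at e2
      constructor
      · rw [eq_div_iff hν1.ne']
        have h2 : Real.cos (2 * θ) * (1 + ν) * (1 + ν)
            = ((ν - 1) - 2 * A * Real.sin (2 * τ)) * (1 + ν) := by
          linear_combination (-2 * ((1 - ν) + 2 * A * Real.sin (2 * τ))) * e1
            + (2 * A * Real.cos (2 * τ)) * e2
            + (-4 * Real.cos (2 * θ)) * K + (-4 * Real.cos (2 * θ) * A ^ 2) * hp
        exact mul_right_cancel₀ hν1.ne' h2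
      · rw [eq_div_iff hν1.ne']
        have h2 : Real.sin (2 * θ) * (1 + ν) * (1 + ν)
            = 2 * A * Real.cos (2 * τ) * (1 + ν) := by
          linear_combination (4 * A * Real.cos (2 * τ)) * e1
            + ((1 - ν) + 2 * A * Real.sin (2 * τ)) * e2
            + (-4 * Real.sin (2 * θ)) * K + (-4 * Real.sin (2 * θ) * A ^ 2) * hp
        exact mul_right_cancel₀ hν1.ne' h2
    · rintro ⟨hc, hs⟩
      rw [Real.sin_sub, Real.cos_sub, Real.cos_sq, hc, hs]
      constructor
      · field_simp
        linear_combination (4 * A ^ 2) * hp + 4 * K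
      · field_simp
        ring
  set c₀ : ℝ := ((ν - 1) - 2 * A * Real.sin (2 * τ)) / (1 + ν) with hc₀def
  set s₀ : ℝ := 2 * A * Real.cos (2 * τ) / (1 + ν) with hs₀def
  have hs₀ : 0 < s₀ := div_pos (by positivity) hν1
  have hpyth : c₀ ^ 2 + s₀ ^ 2 = 1 := by
    rw [hc₀def, hs₀def]
    field_simp
    linear_combination 4 * K + 4 * A ^ 2 * hp
  have hs₀sq : 0 < s₀ ^ 2 := pow_pos hs₀ 2
  have hsq : c₀ ^ 2 < 1 := by linarith
  have habs' : |c₀| < 1 := by rw [← sq_lt_one_iff_abs_lt_one]; exact hsq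
  have habs := abs_lt.1 habs'
  have hlt1 : c₀ < 1 := habs.2
  have hgt1 : -1 < c₀ := habs.1
  have hmem : Real.arccos c₀ / 2 ∈ Set.Ioo 0 (π / 2) := by
    constructor
    · have := Real.arccos_pos.2 hlt1; linarith
    · have hle := Real.arccos_le_pi c₀
      have hne : Real.arccos c₀ ≠ π := fun h => by
        have := Real.arccos_eq_pi.1 h; linarith
      have := lt_of_le_of_ne hle hne
      linarith
  have h2eq : 2 * (Real.arccos c₀ / 2) = Real.arccos c₀ := by ring
  have hcosval : Real.cos (2 * (Real.arccos c₀ / 2)) = c₀ := by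
    rw [h2eq]; exact Real.cos_arccos (by linarith) (by linarith)
  have hsinval : Real.sin (2 * (Real.arccos c₀ / 2)) = s₀ := by
    rw [h2eq, Real.sin_arccos, show 1 - c₀ ^ 2 = s₀ ^ 2 by linarith]
    exact Real.sqrt_sq hs₀.le
  refine ⟨⟨Real.arccos c₀ / 2, ⟨hmem, (key _).2 ⟨hcosval, hsinval⟩⟩, ?_⟩, fun θ _ => key θ⟩
  rintro θ' ⟨hθ'mem, he⟩
  obtain ⟨hc', _⟩ := (key θ').1 he
  have h1 : 2 * θ' ∈ Set.Icc 0 π := by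
    constructor
    · linarith [hθ'mem.1]
    · linarith [hθ'mem.2]
  have h2 : 2 * (Real.arccos c₀ / 2) ∈ Set.Icc 0 π := by
    constructor
    · linarith [hmem.1]
    · linarith [hmem.2]
  have := Real.injOn_cos h1 h2 (by rw [hc', hcosval])
  linarith
end

section
/- Let a, b > 0 with ab < 1. Then θ₀ < τ + π/4 < θ₁. -/
open MeasureTheory Real Set

theorem stmt5 (a b : ℝ) (ha : 0 < a) (hb : 0 < b) (hab : a * b < 1)
    (μ ν A τ θ₀ θ₁ : ℝ) (hμ : μ = (1 - a) / (1 + a)) (hν : ν = (1 - b) / (1 + b))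
    (hA : A = Real.sqrt ((a + b - 2 * a * b) / (a + b + 2 * a * b)))
    (hτ : τ ∈ Set.Ioo (-(π / 4)) (π / 4))
    (hτs : Real.sin (2 * τ)
      = (ν - μ) / Real.sqrt ((μ + ν - 2 * μ * ν) * (2 - μ - ν)))
    (hθ₀ : θ₀ ∈ Set.Ioo 0 (π / 2))
    (hθ₀c : Real.cos (2 * θ₀) = ((1 - μ) - 2 * A * Real.sin (2 * τ)) / (1 + μ))
    (hθ₀s : Real.sin (2 * θ₀) = 2 * A * Real.cos (2 * τ) / (1 + μ))
    (hθ₁ : θ₁ ∈ Set.Ioo 0 (π / 2))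
    (hθ₁c : Real.cos (2 * θ₁) = ((ν - 1) - 2 * A * Real.sin (2 * τ)) / (1 + ν))
    (hθ₁s : Real.sin (2 * θ₁) = 2 * A * Real.cos (2 * τ) / (1 + ν)) :
    θ₀ < τ + π / 4 ∧ τ + π / 4 < θ₁ := by
  obtain ⟨hτ1, hτ2⟩ := hτ
  obtain ⟨hθ01, hθ02⟩ := hθ₀
  obtain ⟨hθ11, hθ12⟩ := hθ₁
  have hπ : (0:ℝ) < π := Real.pi_pos
  have h1a : (0:ℝ) < 1 + a := by linarith
  have h1b : (0:ℝ) < 1 + b := by linarith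
  have hμ1 : 0 < 1 + μ := by
    have : 1 + μ = 2 / (1 + a) := by rw [hμ]; field_simp; ring
    rw [this]; positivity
  have hμ2 : 0 < 1 - μ := by
    have : 1 - μ = 2 * a / (1 + a) := by rw [hμ]; field_simp; ring
    rw [this]; positivity
  have hν1 : 0 < 1 + ν := by
    have : 1 + ν = 2 / (1 + b) := by rw [hν]; field_simp; ring
    rw [this]; positivity
  have hν2 : ν - 1 < 0 := by
    have : ν - 1 = -(2 * b) / (1 + b) := by rw [hν]; field_simp; ring
    rw [this]
    apply div_neg_of_neg_of_pos (by linarith) h1b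
  have hcτ : 0 < Real.cos (2 * τ) := by
    apply Real.cos_pos_of_mem_Ioo
    constructor <;> [linarith; linarith]
  have hc0 : Real.cos (2 * θ₀ - 2 * τ) = (1 - μ) * Real.cos (2 * τ) / (1 + μ) := by
    rw [Real.cos_sub, hθ₀c, hθ₀s]
    field_simp
    ring
  have hc1 : Real.cos (2 * θ₁ - 2 * τ) = (ν - 1) * Real.cos (2 * τ) / (1 + ν) := by
    rw [Real.cos_sub, hθ₁c, hθ₁s]
    field_simp
    ring
  have hc0pos : 0 < Real.cos (2 * θ₀ - 2 * τ) := by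
    rw [hc0]; positivity
  have hc1neg : Real.cos (2 * θ₁ - 2 * τ) < 0 := by
    rw [hc1]
    exact div_neg_of_neg_of_pos (mul_neg_of_neg_of_pos hν2 hcτ) hν1
  constructor
  · by_contra h
    push_neg at h
    have h2 : π / 2 ≤ 2 * θ₀ - 2 * τ := by linarith
    have h3 : 2 * θ₀ - 2 * τ ≤ π + π / 2 := by linarith
    have := Real.cos_nonpos_of_pi_div_two_le_of_le h2 h3
    linarith
  · by_contra h
    push_neg at h
    have h2 : 2 * θ₁ - 2 * τ ≤ π / 2 := by linarith
    have h3 : -(π / 2) ≤ 2 * θ₁ - 2 * τ := by linarith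
    have := Real.cos_nonneg_of_mem_Icc ⟨h3, h2⟩
    linarith
end

section
/- Let a > 0 and set μ = (1−a)/(1+a). If f : ℝ → ℂ is measurable and C ≥ 0 satisfies |f(x)| ≤ C e^{−a x²/2} for all x ∈ ℝ, then for all r ≥ 0 and θ ∈ ℝ, |Bf(r e^{iθ})| ≤ C √(2/(1+a)) exp((μ + (1−μ) sin²θ) r²/4). -/
open MeasureTheory Real Set

lemma integrable_gauss_lin {b : ℝ} (hb : 0 < b) (u : ℝ) :
    Integrable (fun x : ℝ => Real.exp (u * x - b * x ^ 2)) := by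
  have h : ∀ x : ℝ, u * x - b * x ^ 2 = u ^ 2 / (4 * b) + -b * (x - u / (2 * b)) ^ 2 := by
    intro x; field_simp; ring
  simp_rw [h, Real.exp_add]
  exact ((integrable_exp_neg_mul_sq hb).comp_sub_right (u / (2 * b))).const_mul _

lemma integral_gauss_lin {b : ℝ} (hb : 0 < b) (u : ℝ) :
    ∫ x : ℝ, Real.exp (u * x - b * x ^ 2)
      = Real.sqrt (π / b) * Real.exp (u ^ 2 / (4 * b)) := by
  have h : ∀ x : ℝ, u * x - b * x ^ 2 = u ^ 2 / (4 * b) + -b * (x - u / (2 * b)) ^ 2 := by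
    intro x; field_simp; ring
  simp_rw [h, Real.exp_add, integral_const_mul]
  rw [integral_sub_right_eq_self (fun y : ℝ => Real.exp (-b * y ^ 2)) (u / (2 * b)),
    integral_gaussian]
  ring

theorem stmt7 (a : ℝ) (ha : 0 < a) (μ : ℝ) (hμ : μ = (1 - a) / (1 + a))
    (f : ℝ → ℂ) (hf : Measurable f) (C : ℝ) (hC : 0 ≤ C)
    (hbd : ∀ x : ℝ, ‖f x‖ ≤ C * Real.exp (-a * x ^ 2 / 2)) :
    ∀ r θ : ℝ, 0 ≤ r →
      ‖bargmann f ((r : ℂ) * Complex.exp ((θ : ℂ) * Complex.I))‖ ≤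
        C * Real.sqrt (2 / (1 + a)) *
          Real.exp ((μ + (1 - μ) * Real.sin θ ^ 2) * r ^ 2 / 4) := by
  intro r θ hr
  have ha1 : (0:ℝ) < 1 + a := by linarith
  set u := r * Real.cos θ with hu
  set v := r * Real.sin θ with hv
  set b := (1 + a) / 2 with hb
  have hbpos : (0:ℝ) < b := by rw [hb]; linarith
  have hw : (r : ℂ) * Complex.exp ((θ:ℂ) * Complex.I) = (u : ℂ) + (v : ℂ) * Complex.I := by
    rw [Complex.exp_mul_I, ← Complex.ofReal_cos, ← Complex.ofReal_sin, hu, hv]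
    push_cast; ring
  set w : ℂ := (u : ℂ) + (v : ℂ) * Complex.I with hwdef
  rw [hw]
  -- abs of the prefactor
  have habs1 : ‖Complex.exp (-w ^ 2 / 4) / (Real.sqrt Real.pi : ℂ)‖
      = Real.exp ((v ^ 2 - u ^ 2) / 4) / Real.sqrt π := by
    rw [norm_div, Complex.norm_exp, Complex.norm_real, Real.norm_eq_abs,
      abs_of_nonneg (Real.sqrt_nonneg _)]
    congr 1
    congr 1
    simp [hwdef, Complex.div_re, pow_two]
  -- pointwise bound on the integrand norm
  have hptwise : ∀ x : ℝ, ‖Complex.exp ((x : ℂ) * w - (x : ℂ) ^ 2 / 2) * f x‖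
      ≤ C * Real.exp (u * x - b * x ^ 2) := by
    intro x
    rw [norm_mul, Complex.norm_exp]
    have hre : (((x : ℂ) * w - (x : ℂ) ^ 2 / 2)).re = x * u - x ^ 2 / 2 := by
      simp [hwdef, Complex.div_re, pow_two]
    rw [hre]
    calc Real.exp (x * u - x ^ 2 / 2) * ‖f x‖
        ≤ Real.exp (x * u - x ^ 2 / 2) * (C * Real.exp (-a * x ^ 2 / 2)) := by
          exact mul_le_mul_of_nonneg_left (hbd x) (Real.exp_nonneg _)
      _ = C * Real.exp (u * x - b * x ^ 2) := by
          rw [mul_left_comm, ← Real.exp_add]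
          congr 2
          rw [hb]; ring
  -- integral bound
  have hint : ‖∫ x : ℝ, Complex.exp ((x : ℂ) * w - (x : ℂ) ^ 2 / 2) * f x‖
      ≤ C * (Real.sqrt (π / b) * Real.exp (u ^ 2 / (4 * b))) := by
    calc ‖∫ x : ℝ, Complex.exp ((x : ℂ) * w - (x : ℂ) ^ 2 / 2) * f x‖
        ≤ ∫ x : ℝ, ‖Complex.exp ((x : ℂ) * w - (x : ℂ) ^ 2 / 2) * f x‖ :=
          norm_integral_le_integral_norm _
      _ ≤ ∫ x : ℝ, C * Real.exp (u * x - b * x ^ 2) := by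
          apply integral_mono_of_nonneg
          · exact Filter.Eventually.of_forall fun x => norm_nonneg _
          · exact (integrable_gauss_lin hbpos u).const_mul C
          · exact Filter.Eventually.of_forall fun x => hptwise x
      _ = C * (Real.sqrt (π / b) * Real.exp (u ^ 2 / (4 * b))) := by
          rw [integral_const_mul, integral_gauss_lin hbpos u]
  -- combine
  have hsqrt : Real.sqrt (π / b) = Real.sqrt π * Real.sqrt (2 / (1 + a)) := by
    rw [← Real.sqrt_mul Real.pi_nonneg]
    congr 1
    rw [hb]; field_simp
  have hπ : (0:ℝ) < Real.sqrt π := Real.sqrt_pos.mpr Real.pi_pos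
  rw [bargmann, norm_mul, habs1]
  calc Real.exp ((v ^ 2 - u ^ 2) / 4) / Real.sqrt π *
        ‖∫ x : ℝ, Complex.exp ((x : ℂ) * w - (x : ℂ) ^ 2 / 2) * f x‖
      ≤ Real.exp ((v ^ 2 - u ^ 2) / 4) / Real.sqrt π *
        (C * (Real.sqrt (π / b) * Real.exp (u ^ 2 / (4 * b)))) := by
        exact mul_le_mul_of_nonneg_left hint (by positivity)
    _ = C * Real.sqrt (2 / (1 + a)) *
        (Real.exp ((v ^ 2 - u ^ 2) / 4) * Real.exp (u ^ 2 / (4 * b))) := by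
        rw [hsqrt]; field_simp
    _ = C * Real.sqrt (2 / (1 + a)) *
        Real.exp ((μ + (1 - μ) * Real.sin θ ^ 2) * r ^ 2 / 4) := by
        rw [← Real.exp_add]
        congr 2
        have hcs : Real.cos θ ^ 2 = 1 - Real.sin θ ^ 2 := by
          nlinarith [Real.sin_sq_add_cos_sq θ]
        rw [hu, hv, hb, hμ]
        simp only [mul_pow]
        rw [hcs]
        field_simp
        ring
end

section
/- For every Schwartz function f on ℝ and every w ∈ ℂ, B(Ff)(w) = Bf(−iw); equivalently, Bf(w) = B(Ff)(iw). -/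
open MeasureTheory Real Set

lemma gauss_int (c : ℂ) :
    ∫ ξ : ℝ, Complex.exp ((ξ : ℂ) * c - (ξ : ℂ) ^ 2 / 2) =
      (Real.sqrt (2 * Real.pi) : ℂ) * Complex.exp (c ^ 2 / 2) := by
  have h := integral_cexp_quadratic (b := -(1/2)) (by norm_num) c 0
  have e1 : ∀ ξ : ℝ, (-(1/2) : ℂ) * ξ ^ 2 + c * ξ + 0 = (ξ : ℂ) * c - (ξ : ℂ) ^ 2 / 2 := by
    intro ξ; ring
  simp_rw [e1] at h
  rw [h]
  congr 1
  · rw [show ((π : ℂ) / - -(1/2 : ℂ)) = ((2 * π : ℝ) : ℂ) by push_cast; ring,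
      Real.sqrt_eq_rpow, Complex.ofReal_cpow Real.two_pi_pos.le]
    norm_num
  · congr 1; ring

lemma barg_fourier (f : SchwartzMap ℝ ℂ) (w : ℂ) :
    bargmann (fourierT ⇑f) w = bargmann ⇑f (-Complex.I * w) := by
  have hs : (Real.sqrt (2 * Real.pi)) ≠ 0 := by positivity
  have hp : (Real.sqrt Real.pi) ≠ 0 := by positivity
  -- integrability of the double integrand
  have h1 : Integrable (fun ξ : ℝ => Complex.exp ((ξ : ℂ) * w - (ξ : ℂ) ^ 2 / 2)) := by
    have e : ∀ ξ : ℝ, (ξ : ℂ) * w - (ξ : ℂ) ^ 2 / 2 = -(1/2 : ℂ) * ξ ^ 2 + w * ξ + 0 := by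
      intro ξ; ring
    simp_rw [e]
    exact integrable_cexp_quadratic (by norm_num) w 0
  have hcont : Continuous (fun p : ℝ × ℝ =>
      Complex.exp ((p.1 : ℂ) * w - (p.1 : ℂ) ^ 2 / 2) *
        (f p.2 * Complex.exp (-(Complex.I * (p.1 : ℂ) * (p.2 : ℂ))))) := by
    have hc1 : Continuous (fun p : ℝ × ℝ => ((p.1 : ℂ))) :=
      Complex.continuous_ofReal.comp continuous_fst
    have hc2 : Continuous (fun p : ℝ × ℝ => ((p.2 : ℂ))) :=
      Complex.continuous_ofReal.comp continuous_snd
    exact (Complex.continuous_exp.comp ((hc1.mul continuous_const).sub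
        ((hc1.pow 2).div_const 2))).mul
      ((f.continuous.comp continuous_snd).mul
        (Complex.continuous_exp.comp (((continuous_const.mul hc1).mul hc2).neg)))
  have hprod : Integrable (fun p : ℝ × ℝ =>
      ‖Complex.exp ((p.1 : ℂ) * w - (p.1 : ℂ) ^ 2 / 2)‖ * ‖f p.2‖) (volume.prod volume) :=
    h1.norm.mul_prod (f.integrable (μ := volume)).norm
  have hint : Integrable (Function.uncurry fun (ξ x : ℝ) =>
      Complex.exp ((ξ : ℂ) * w - (ξ : ℂ) ^ 2 / 2) *
        (f x * Complex.exp (-(Complex.I * (ξ : ℂ) * (x : ℂ))))) (volume.prod volume) := by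
    refine hprod.mono' hcont.aestronglyMeasurable (Filter.Eventually.of_forall fun p => ?_)
    have he : ‖Complex.exp (-(Complex.I * (p.1 : ℂ) * (p.2 : ℂ)))‖ = 1 := by
      rw [Complex.norm_exp]
      simp
    simp only [Function.uncurry, norm_mul, he, mul_one, norm_norm, le_refl]
  have key : (∫ ξ : ℝ, Complex.exp ((ξ : ℂ) * w - (ξ : ℂ) ^ 2 / 2) *
        ∫ x : ℝ, f x * Complex.exp (-(Complex.I * (ξ : ℂ) * (x : ℂ)))) =
      (Real.sqrt (2 * Real.pi) : ℂ) * Complex.exp (w ^ 2 / 2) *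
        ∫ x : ℝ, Complex.exp ((x : ℂ) * (-Complex.I * w) - (x : ℂ) ^ 2 / 2) * f x := by
    calc (∫ ξ : ℝ, Complex.exp ((ξ : ℂ) * w - (ξ : ℂ) ^ 2 / 2) *
          ∫ x : ℝ, f x * Complex.exp (-(Complex.I * (ξ : ℂ) * (x : ℂ))))
        = ∫ ξ : ℝ, ∫ x : ℝ, Complex.exp ((ξ : ℂ) * w - (ξ : ℂ) ^ 2 / 2) *
            (f x * Complex.exp (-(Complex.I * (ξ : ℂ) * (x : ℂ)))) := by
          simp_rw [MeasureTheory.integral_const_mul]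
      _ = ∫ x : ℝ, ∫ ξ : ℝ, Complex.exp ((ξ : ℂ) * w - (ξ : ℂ) ^ 2 / 2) *
            (f x * Complex.exp (-(Complex.I * (ξ : ℂ) * (x : ℂ)))) :=
          MeasureTheory.integral_integral_swap hint
      _ = ∫ x : ℝ, f x * ((Real.sqrt (2 * Real.pi) : ℂ) *
            Complex.exp ((w - Complex.I * x) ^ 2 / 2)) := by
          refine integral_congr_ae (Filter.Eventually.of_forall fun x => ?_)
          have h4 : ∀ ξ : ℝ, Complex.exp ((ξ : ℂ) * w - (ξ : ℂ) ^ 2 / 2) *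
              (f x * Complex.exp (-(Complex.I * (ξ : ℂ) * (x : ℂ)))) =
              f x * Complex.exp ((ξ : ℂ) * (w - Complex.I * x) - (ξ : ℂ) ^ 2 / 2) := by
            intro ξ
            rw [mul_left_comm, ← Complex.exp_add]
            congr 2
            ring
          simp_rw [h4, MeasureTheory.integral_const_mul, gauss_int]
      _ = (Real.sqrt (2 * Real.pi) : ℂ) * Complex.exp (w ^ 2 / 2) *
            ∫ x : ℝ, Complex.exp ((x : ℂ) * (-Complex.I * w) - (x : ℂ) ^ 2 / 2) * f x := by
          rw [← MeasureTheory.integral_const_mul]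
          refine integral_congr_ae (Filter.Eventually.of_forall fun x => ?_)
          dsimp only
          have h5 : (w - Complex.I * (x : ℂ)) ^ 2 / 2 =
              w ^ 2 / 2 + ((x : ℂ) * (-Complex.I * w) - (x : ℂ) ^ 2 / 2) := by
            linear_combination ((x : ℂ) ^ 2 / 2) * Complex.I_sq
          rw [h5, Complex.exp_add]
          ring
  have h6 : ∀ ξ : ℝ, Complex.exp ((ξ : ℂ) * w - (ξ : ℂ) ^ 2 / 2) * fourierT (⇑f) ξ =
      ((1 / Real.sqrt (2 * Real.pi) : ℝ) : ℂ) * (Complex.exp ((ξ : ℂ) * w - (ξ : ℂ) ^ 2 / 2) *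
        ∫ x : ℝ, f x * Complex.exp (-(Complex.I * (ξ : ℂ) * (x : ℂ)))) := by
    intro ξ; rw [fourierT]; ring
  simp only [bargmann]
  simp_rw [h6, MeasureTheory.integral_const_mul, key]
  have h7 : -(-Complex.I * w) ^ 2 / 4 = -w ^ 2 / 4 + w ^ 2 / 2 := by
    linear_combination (-(w ^ 2) / 4) * Complex.I_sq
  rw [h7, Complex.exp_add]
  have hs' : ((Real.sqrt (2 * Real.pi) : ℝ) : ℂ) ≠ 0 := by exact_mod_cast hs
  have hp' : ((Real.sqrt Real.pi : ℝ) : ℂ) ≠ 0 := by exact_mod_cast hp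
  push_cast
  field_simp

theorem stmt8 (f : SchwartzMap ℝ ℂ) (w : ℂ) :
    bargmann (fourierT ⇑f) w = bargmann ⇑f (-Complex.I * w) ∧
    bargmann ⇑f w = bargmann (fourierT ⇑f) (Complex.I * w) := by
  refine ⟨barg_fourier f w, ?_⟩
  rw [barg_fourier f (Complex.I * w)]
  congr 1
  rw [← mul_assoc, neg_mul, Complex.I_mul_I, neg_neg, one_mul]
end

section
/- Let a, b > 0 with ab < 1, set ν = (1−b)/(1+b), and let f ∈ E(a,b) with constant C, so that |Ff(ξ)| ≤ C e^{−b ξ²/2} for all ξ ∈ ℝ. Then for all r ≥ 0 and θ ∈ ℝ, |Bf(r e^{iθ})| ≤ C √(2/(1+b)) exp((ν + (1−ν) cos²θ) r²/4). -/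
open MeasureTheory Real Set

lemma cpow_half_eq_sqrt {x : ℝ} (hx : 0 ≤ x) : (x:ℂ) ^ (1/2 : ℂ) = (Real.sqrt x : ℂ) := by
  rw [show ((1:ℂ)/2) = ((1/2:ℝ):ℂ) by norm_num, ← Complex.ofReal_cpow hx]
  norm_num [Real.sqrt_eq_rpow]

lemma re_aux (w : ℂ) (ξ x : ℝ) :
    (-(Complex.I*ξ*x) + (-(ξ:ℂ)^2/2 + Complex.I*w*ξ)).re
      = -ξ^2/2 + (Complex.I*w).re * ξ := by
  simp [Complex.mul_re, Complex.mul_im, Complex.div_re, Complex.normSq, pow_two]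

lemma prod_integrable (f : ℝ → ℂ) (hfi : Integrable f) (w : ℂ) :
    Integrable (fun p : ℝ × ℝ =>
      f p.2 * Complex.exp (-(Complex.I*p.1*p.2) + (-(p.1:ℂ)^2/2 + Complex.I*w*p.1)))
      (volume.prod volume) := by
  set t : ℝ := (Complex.I*w).re with ht
  have hg : Integrable (fun ξ : ℝ => Real.exp (-ξ^2/2 + t*ξ)) := by
    have h := (integrable_cexp_quadratic (b := (1/2:ℂ)) (by norm_num) ((t:ℂ)) 0).norm
    have heq : ∀ ξ:ℝ, ‖Complex.exp (-(1/2:ℂ)*ξ^2 + t*ξ + 0)‖ = Real.exp (-ξ^2/2 + t*ξ) := by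
      intro ξ
      rw [Complex.norm_exp]
      congr 1
      have : -(1/2:ℂ)*ξ^2 + (t:ℂ)*ξ + 0 = ((-ξ^2/2 + t*ξ : ℝ) : ℂ) := by push_cast; ring
      rw [this, Complex.ofReal_re]
    simpa only [heq] using h
  apply Integrable.mono' (hg.mul_prod hfi.norm)
  · apply AEStronglyMeasurable.mul (hfi.1.comp_snd)
    apply Continuous.aestronglyMeasurable
    fun_prop
  · filter_upwards with p
    rw [norm_mul, Complex.norm_exp, re_aux]
    rw [mul_comm]

lemma key_identity (f : ℝ → ℂ) (hfi : Integrable f) (w : ℂ) :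
    ∫ x : ℝ, Complex.exp ((x:ℂ)*w - (x:ℂ)^2/2) * f x
      = Complex.exp (w^2/2) *
        ∫ ξ : ℝ, fourierT f ξ * Complex.exp (-(ξ:ℂ)^2/2 + Complex.I*w*ξ) := by
  have hsq : (0:ℝ) < Real.sqrt (2*Real.pi) := Real.sqrt_pos.2 (by positivity)
  unfold fourierT
  have step1 : ∀ ξ : ℝ,
      (((1 / Real.sqrt (2 * Real.pi) : ℝ):ℂ) * ∫ x : ℝ, f x * Complex.exp (-(Complex.I * ξ * x)))
        * Complex.exp (-(ξ:ℂ)^2/2 + Complex.I*w*ξ)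
      = ((1 / Real.sqrt (2 * Real.pi) : ℝ):ℂ) *
        ∫ x : ℝ, f x * Complex.exp (-(Complex.I * ξ * x) + (-(ξ:ℂ)^2/2 + Complex.I*w*ξ)) := by
    intro ξ
    rw [mul_assoc, ← integral_mul_const]
    congr 1
    refine integral_congr_ae (Filter.Eventually.of_forall fun x => ?_)
    dsimp only
    rw [mul_assoc, ← Complex.exp_add]
  simp_rw [step1, integral_const_mul]
  rw [integral_integral_swap (by exact prod_integrable f hfi w)]
  have step2 : ∀ x : ℝ,
      (∫ ξ : ℝ, f x * Complex.exp (-(Complex.I * ξ * x) + (-(ξ:ℂ)^2/2 + Complex.I*w*ξ)))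
      = f x * ((Real.sqrt (2*Real.pi) : ℂ) * Complex.exp (-(w - x)^2/2)) := by
    intro x
    rw [integral_const_mul]
    congr 1
    have hexp : ∀ ξ : ℝ, (-(Complex.I * ξ * x) + (-(ξ:ℂ)^2/2 + Complex.I*w*ξ))
        = (-(1/2:ℂ)) * ξ^2 + (Complex.I*(w - x)) * ξ + 0 := by
      intro ξ; ring
    simp_rw [hexp]
    rw [integral_cexp_quadratic (by norm_num) (Complex.I*(w - x)) 0]
    congr 1
    · rw [show (Real.pi:ℂ) / -(-(1/2:ℂ)) = ((2*Real.pi:ℝ):ℂ) by push_cast; ring,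
        cpow_half_eq_sqrt (by positivity)]
    · congr 1
      have : (Complex.I*(w - x))^2 = -(w - x)^2 := by
        rw [mul_pow, Complex.I_sq]; ring
      rw [this]; ring
  simp_rw [step2]
  have step3 : ∀ x : ℝ,
      Complex.exp (w^2/2) * (((1 / Real.sqrt (2 * Real.pi) : ℝ):ℂ) *
        (f x * ((Real.sqrt (2*Real.pi) : ℂ) * Complex.exp (-(w - x)^2/2))))
      = Complex.exp ((x:ℂ)*w - (x:ℂ)^2/2) * f x := by
    intro x
    have h1 : ((1 / Real.sqrt (2 * Real.pi) : ℝ):ℂ) * (Real.sqrt (2*Real.pi) : ℂ) = 1 := by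
      rw [← Complex.ofReal_mul, one_div, inv_mul_cancel₀ hsq.ne', Complex.ofReal_one]
    have h2 : Complex.exp (w^2/2) * Complex.exp (-(w - x)^2/2)
        = Complex.exp ((x:ℂ)*w - (x:ℂ)^2/2) := by
      rw [← Complex.exp_add]; congr 1; ring
    calc Complex.exp (w^2/2) * (((1 / Real.sqrt (2 * Real.pi) : ℝ):ℂ) *
        (f x * ((Real.sqrt (2*Real.pi) : ℂ) * Complex.exp (-(w - x)^2/2))))
        = (((1 / Real.sqrt (2 * Real.pi) : ℝ):ℂ) * (Real.sqrt (2*Real.pi) : ℂ)) *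
          ((Complex.exp (w^2/2) * Complex.exp (-(w - x)^2/2)) * f x) := by ring
      _ = Complex.exp ((x:ℂ)*w - (x:ℂ)^2/2) * f x := by rw [h1, h2, one_mul]
  rw [← integral_const_mul, ← integral_const_mul]
  refine (integral_congr_ae (Filter.Eventually.of_forall fun x => ?_)).symm
  exact step3 x

lemma rexp_quad_eq {c : ℝ} (s ξ : ℝ) :
    ‖Complex.exp (-((c/2:ℝ):ℂ)*ξ^2 + s*ξ + 0)‖ = Real.exp (-c*ξ^2/2 + s*ξ) := by
  rw [Complex.norm_exp]
  congr 1
  have : -((c/2:ℝ):ℂ)*ξ^2 + (s:ℂ)*ξ + 0 = ((-c*ξ^2/2 + s*ξ : ℝ) : ℂ) := by push_cast; ring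
  rw [this, Complex.ofReal_re]

lemma integrable_rexp_quad {c : ℝ} (hc : 0 < c) (s : ℝ) :
    Integrable (fun ξ : ℝ => Real.exp (-c*ξ^2/2 + s*ξ)) := by
  have h := (integrable_cexp_quadratic (b := ((c/2 : ℝ):ℂ)) (by simpa using half_pos hc)
    ((s:ℂ)) 0).norm
  simpa only [rexp_quad_eq] using h

lemma integral_rexp_quad {c : ℝ} (hc : 0 < c) (s : ℝ) :
    ∫ ξ : ℝ, Real.exp (-c*ξ^2/2 + s*ξ)
      = Real.sqrt (2*Real.pi/c) * Real.exp (s^2/(2*c)) := by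
  have hInt : Integrable (fun ξ : ℝ => Complex.exp (-((c/2:ℝ):ℂ)*ξ^2 + (s:ℂ)*ξ + 0)) :=
    integrable_cexp_quadratic (by simpa using half_pos hc) ((s:ℂ)) 0
  have h1 : ∀ ξ : ℝ, Real.exp (-c*ξ^2/2 + s*ξ)
      = (Complex.exp (-((c/2:ℝ):ℂ)*ξ^2 + (s:ℂ)*ξ + 0)).re := by
    intro ξ
    have : -((c/2:ℝ):ℂ)*ξ^2 + (s:ℂ)*ξ + 0 = ((-c*ξ^2/2 + s*ξ : ℝ) : ℂ) := by push_cast; ring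
    rw [this, ← Complex.ofReal_exp, Complex.ofReal_re]
  simp_rw [h1]
  have h4 := integral_re (μ := volume) hInt
  simp only [RCLike.re_to_complex] at h4
  rw [h4]
  rw [integral_cexp_quadratic (by simpa using half_pos hc) ((s:ℂ)) 0]
  have h2 : (Real.pi : ℂ) / -(-((c/2:ℝ):ℂ)) = ((2*Real.pi/c : ℝ):ℂ) := by
    rw [neg_neg]
    push_cast
    rw [div_div_eq_mul_div]
    ring
  have hc' : (c:ℂ) ≠ 0 := by exact_mod_cast hc.ne'
  have h3 : (0:ℂ) - (s:ℂ)^2 / (4 * -((c/2:ℝ):ℂ)) = ((s^2/(2*c) : ℝ) : ℂ) := by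
    push_cast
    field_simp
    ring
  rw [h2, h3, cpow_half_eq_sqrt (by positivity), ← Complex.ofReal_exp, ← Complex.ofReal_mul,
    Complex.ofReal_re]

theorem stmt9 (a b : ℝ) (ha : 0 < a) (hb : 0 < b) (hab : a * b < 1)
    (ν : ℝ) (hν : ν = (1 - b) / (1 + b))
    (f : ℝ → ℂ) (hfi : MeasureTheory.Integrable f) (C : ℝ)
    (hfa : ∀ x : ℝ, ‖f x‖ ≤ C * Real.exp (-a * x ^ 2 / 2))
    (hfb : ∀ ξ : ℝ, ‖fourierT f ξ‖ ≤ C * Real.exp (-b * ξ ^ 2 / 2)) :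
    ∀ r θ : ℝ, 0 ≤ r →
      ‖bargmann f ((r : ℂ) * Complex.exp ((θ : ℂ) * Complex.I))‖ ≤
        C * Real.sqrt (2 / (1 + b)) *
          Real.exp ((ν + (1 - ν) * Real.cos θ ^ 2) * r ^ 2 / 4) := by
  intro r θ hr
  have hb1 : (0:ℝ) < 1 + b := by linarith
  have hC : 0 ≤ C := le_trans (norm_nonneg _) (by simpa using hfb 0)
  set w : ℂ := (r:ℂ) * Complex.exp ((θ:ℂ)*Complex.I) with hwdef
  have hw : w = (r:ℂ) * (↑(Real.cos θ) + ↑(Real.sin θ) * Complex.I) := by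
    rw [hwdef, Complex.exp_mul_I, Complex.ofReal_cos, Complex.ofReal_sin]
  set t : ℝ := (Complex.I*w).re with htdef
  set R : ℝ := (w^2).re with hRdef
  have ht : t = -(r * Real.sin θ) := by
    rw [htdef, hw]
    simp [Complex.mul_re, Complex.mul_im, Complex.sin_ofReal_re, Complex.cos_ofReal_re]
  have htsq : t^2 = r^2 * Real.sin θ^2 := by rw [ht]; ring
  have hR : R = r^2 * (Real.cos θ^2 - Real.sin θ^2) := by
    rw [hRdef, hw]
    simp [pow_two, Complex.mul_re, Complex.mul_im, Complex.sin_ofReal_re, Complex.cos_ofReal_re,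
      Complex.sin_ofReal_im, Complex.cos_ofReal_im]
    ring
  -- re of exponent
  have hre2 : ∀ ξ : ℝ, (-(ξ:ℂ)^2/2 + Complex.I*w*ξ).re = -ξ^2/2 + t*ξ := by
    intro ξ
    rw [htdef]
    simp [Complex.mul_re, Complex.mul_im, Complex.div_re, Complex.normSq, pow_two]
  set J : ℂ := ∫ ξ : ℝ, fourierT f ξ * Complex.exp (-(ξ:ℂ)^2/2 + Complex.I*w*ξ) with hJdef
  have hJ : ‖J‖ ≤ C * (Real.sqrt (2*Real.pi/(1+b)) * Real.exp (t^2/(2*(1+b)))) := by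
    have hint : Integrable (fun ξ:ℝ => C * Real.exp (-(1+b)*ξ^2/2 + t*ξ)) :=
      (integrable_rexp_quad hb1 t).const_mul C
    have hbd : ∀ ξ:ℝ, ‖fourierT f ξ * Complex.exp (-(ξ:ℂ)^2/2 + Complex.I*w*ξ)‖
        ≤ C * Real.exp (-(1+b)*ξ^2/2 + t*ξ) := by
      intro ξ
      rw [norm_mul, Complex.norm_exp, hre2 ξ]
      calc ‖fourierT f ξ‖ * Real.exp (-ξ^2/2 + t*ξ)
          ≤ (C * Real.exp (-b*ξ^2/2)) * Real.exp (-ξ^2/2 + t*ξ) :=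
            mul_le_mul_of_nonneg_right (hfb ξ) (Real.exp_pos _).le
        _ = C * Real.exp (-(1+b)*ξ^2/2 + t*ξ) := by
            rw [mul_assoc, ← Real.exp_add]
            congr 2
            ring
    refine le_trans (norm_integral_le_of_norm_le hint (Filter.Eventually.of_forall hbd)) ?_
    rw [integral_const_mul, integral_rexp_quad hb1 t]
  have habs : ‖bargmann f w‖
      = Real.exp (R/4) / Real.sqrt Real.pi * ‖J‖ := by
    rw [show bargmann f w = (Complex.exp (-w ^ 2 / 4) / (Real.sqrt Real.pi : ℂ)) *
        (Complex.exp (w^2/2) * J) by rw [bargmann, key_identity f hfi w],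
      norm_mul, norm_div, norm_mul, Complex.norm_exp, Complex.norm_exp, Complex.norm_real,
      Real.norm_of_nonneg (Real.sqrt_nonneg _)]
    have e1 : (-w^2/4).re = -R/4 := by
      rw [show (-w^2/4 : ℂ) = ((-(1/4) : ℝ):ℂ) * w^2 by push_cast; ring, Complex.re_ofReal_mul]
      rw [hRdef]; ring
    have e2 : (w^2/2).re = R/2 := by
      rw [show (w^2/2 : ℂ) = (((1/2) : ℝ):ℂ) * w^2 by push_cast; ring, Complex.re_ofReal_mul]
      rw [hRdef]; ring
    rw [e1, e2]
    rw [show Real.exp (-R/4) / Real.sqrt Real.pi * (Real.exp (R/2) * ‖J‖)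
        = (Real.exp (-R/4) * Real.exp (R/2)) / Real.sqrt Real.pi * ‖J‖ by ring,
      ← Real.exp_add, show -R/4 + R/2 = R/4 by ring]
  have hE : R/4 + t^2/(2*(1+b)) = (ν + (1-ν)*Real.cos θ^2) * r^2/4 := by
    rw [hR, htsq, Real.sin_sq, hν]
    field_simp
    ring
  rw [habs]
  calc Real.exp (R/4) / Real.sqrt Real.pi * ‖J‖
      ≤ Real.exp (R/4) / Real.sqrt Real.pi *
        (C * (Real.sqrt (2*Real.pi/(1+b)) * Real.exp (t^2/(2*(1+b))))) :=
        mul_le_mul_of_nonneg_left hJ (by positivity)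
    _ = C * Real.sqrt (2/(1+b)) * Real.exp ((ν + (1-ν)*Real.cos θ^2) * r^2/4) := by
        rw [← hE, Real.exp_add,
          show 2*Real.pi/(1+b) = Real.pi * (2/(1+b)) by ring,
          Real.sqrt_mul Real.pi_pos.le]
        have hπ : Real.sqrt Real.pi ≠ 0 := by positivity
        field_simp
end

section
/- Let τ ∈ (−π/4, π/4) and let α, β satisfy 0 ≤ α < τ + π/4 < β ≤ π/2. Then there exists a constant C > 0 such that for every integer n ≥ 1, ∫_α^β exp((n/2) sin(2t − 2τ)) dt ≤ C n^{−1/2} e^{n/2}. -/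
open MeasureTheory Real Set

theorem stmt12 (τ α β : ℝ) (hτ : τ ∈ Set.Ioo (-(π / 4)) (π / 4))
    (hα : 0 ≤ α) (hατ : α < τ + π / 4) (hτβ : τ + π / 4 < β) (hβ : β ≤ π / 2) :
    ∃ C : ℝ, 0 < C ∧ ∀ n : ℕ, 1 ≤ n →
      (∫ t in α..β, Real.exp ((n / 2) * Real.sin (2 * t - 2 * τ))) ≤
        C * (n : ℝ) ^ (-(1 : ℝ) / 2) * Real.exp (n / 2) := by
  obtain ⟨hτ1, hτ2⟩ := hτ
  have hπ := Real.pi_pos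
  set t₀ := τ + π / 4 with ht₀
  set c : ℝ := 8 / π ^ 2 with hc
  have hc0 : 0 < c := by positivity
  refine ⟨Real.sqrt (2 * π / c), by positivity, fun n hn => ?_⟩
  have hn0 : (0:ℝ) < n := by exact_mod_cast hn
  have hαβ : α ≤ β := by linarith
  have hb0 : 0 < c * n / 2 := by positivity
  have key : ∀ t ∈ Set.Icc α β,
      Real.exp ((n / 2) * Real.sin (2 * t - 2 * τ)) ≤
      Real.exp (n / 2) * Real.exp (-(c * n / 2) * (t - t₀) ^ 2) := by
    intro t ht
    have h1 : Real.sin (2 * t - 2 * τ) = Real.cos (2 * (t - t₀)) := by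
      rw [ht₀, show 2 * (t - (τ + π / 4)) = (2 * t - 2 * τ) - π / 2 by ring,
        Real.cos_sub_pi_div_two]
    have habs : |2 * (t - t₀)| ≤ π := by
      rw [abs_le, ht₀]
      constructor <;> [nlinarith [ht.1, ht.2]; nlinarith [ht.1, ht.2]]
    have h2 := Real.cos_le_one_sub_mul_cos_sq habs
    rw [h1, ← Real.exp_add]
    apply Real.exp_le_exp.2
    have h3 := mul_le_mul_of_nonneg_left h2 (show (0:ℝ) ≤ n / 2 by positivity)
    have heq : (n:ℝ) / 2 * (1 - 2 / π ^ 2 * (2 * (t - t₀)) ^ 2)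
        = n / 2 + (-(c * n / 2) * (t - t₀) ^ 2) := by
      rw [hc]; field_simp; ring
    linarith [heq ▸ h3]
  have hI : Integrable (fun x : ℝ => Real.exp (-(c * n / 2) * x ^ 2)) :=
    integrable_exp_neg_mul_sq hb0
  have hI' : Integrable (fun x : ℝ => Real.exp (-(c * n / 2) * (x - t₀) ^ 2)) :=
    hI.comp_sub_right t₀
  calc (∫ t in α..β, Real.exp ((n / 2) * Real.sin (2 * t - 2 * τ)))
      ≤ ∫ t in α..β, Real.exp (n / 2) * Real.exp (-(c * n / 2) * (t - t₀) ^ 2) := by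
        have cont1 : Continuous fun t : ℝ => Real.exp ((n / 2) * Real.sin (2 * t - 2 * τ)) := by
          fun_prop
        have cont2 : Continuous fun t : ℝ =>
            Real.exp (n / 2) * Real.exp (-(c * n / 2) * (t - t₀) ^ 2) := by fun_prop
        exact intervalIntegral.integral_mono_on hαβ (cont1.intervalIntegrable _ _)
          (cont2.intervalIntegrable _ _) key
    _ = Real.exp (n / 2) * ∫ t in α..β, Real.exp (-(c * n / 2) * (t - t₀) ^ 2) := by
        rw [intervalIntegral.integral_const_mul]
    _ ≤ Real.exp (n / 2) * ∫ t : ℝ, Real.exp (-(c * n / 2) * (t - t₀) ^ 2) := by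
        apply mul_le_mul_of_nonneg_left _ (Real.exp_pos _).le
        rw [intervalIntegral.integral_of_le hαβ]
        exact setIntegral_le_integral hI' (Filter.Eventually.of_forall fun x => (Real.exp_pos _).le)
    _ = Real.exp (n / 2) * Real.sqrt (π / (c * n / 2)) := by
        rw [integral_sub_right_eq_self (fun x => Real.exp (-(c * n / 2) * x ^ 2)) t₀,
          integral_gaussian]
    _ = Real.sqrt (2 * π / c) * (n : ℝ) ^ (-(1 : ℝ) / 2) * Real.exp (n / 2) := by
        have h4 : π / (c * n / 2) = (2 * π / c) * ((n:ℝ))⁻¹ := by field_simp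
        have h5 : Real.sqrt ((n:ℝ)⁻¹) = (n : ℝ) ^ (-(1 : ℝ) / 2) := by
          rw [show (-(1:ℝ) / 2) = -(1/2) by ring, Real.rpow_neg hn0.le,
            ← Real.sqrt_eq_rpow, Real.sqrt_inv]
        rw [h4, Real.sqrt_mul (by positivity), h5]; ring
end

section
/- Let a, b > 0 with ab < 1 and let n ≥ 1 be an integer. Then ∫_0^{θ₀} exp((μ + (1−μ) sin²t) n/(2A)) dt ≤ (θ₀/(τ + π/4 − θ₀)) ∫_{θ₀}^{θ₁} exp((n/2) sin(2t − 2τ)) dt, and ∫_{θ₁}^{π/2} exp((ν + (1−ν) cos²t) n/(2A)) dt ≤ ((π/2 − θ₁)/(θ₁ − τ − π/4)) ∫_{θ₀}^{θ₁} exp((n/2) sin(2t − 2τ)) dt. -/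
open MeasureTheory Real Set

set_option maxHeartbeats 1000000 in
theorem stmt13 (a b : ℝ) (ha : 0 < a) (hb : 0 < b) (hab : a * b < 1)
    (μ ν A τ θ₀ θ₁ : ℝ) (hμ : μ = (1 - a) / (1 + a)) (hν : ν = (1 - b) / (1 + b))
    (hA : A = Real.sqrt ((a + b - 2 * a * b) / (a + b + 2 * a * b)))
    (hτ : τ ∈ Set.Ioo (-(π / 4)) (π / 4))
    (hτs : Real.sin (2 * τ)
      = (ν - μ) / Real.sqrt ((μ + ν - 2 * μ * ν) * (2 - μ - ν)))
    (hθ₀ : θ₀ ∈ Set.Ioo 0 (π / 2))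
    (hθ₀c : Real.cos (2 * θ₀) = ((1 - μ) - 2 * A * Real.sin (2 * τ)) / (1 + μ))
    (hθ₀s : Real.sin (2 * θ₀) = 2 * A * Real.cos (2 * τ) / (1 + μ))
    (hθ₁ : θ₁ ∈ Set.Ioo 0 (π / 2))
    (hθ₁c : Real.cos (2 * θ₁) = ((ν - 1) - 2 * A * Real.sin (2 * τ)) / (1 + ν))
    (hθ₁s : Real.sin (2 * θ₁) = 2 * A * Real.cos (2 * τ) / (1 + ν))
    (n : ℕ) (hn : 1 ≤ n) :
    (∫ t in (0 : ℝ)..θ₀,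
        Real.exp ((μ + (1 - μ) * Real.sin t ^ 2) * n / (2 * A))) ≤
      (θ₀ / (τ + π / 4 - θ₀)) *
        ∫ t in θ₀..θ₁, Real.exp ((n / 2) * Real.sin (2 * t - 2 * τ)) ∧
    (∫ t in θ₁..(π / 2),
        Real.exp ((ν + (1 - ν) * Real.cos t ^ 2) * n / (2 * A))) ≤
      ((π / 2 - θ₁) / (θ₁ - τ - π / 4)) *
        ∫ t in θ₀..θ₁, Real.exp ((n / 2) * Real.sin (2 * t - 2 * τ)) := by
  obtain ⟨hτl, hτr⟩ := hτ
  obtain ⟨hθ₀l, hθ₀r⟩ := hθ₀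
  obtain ⟨hθ₁l, hθ₁r⟩ := hθ₁
  have hπ := Real.pi_pos
  have hP : 0 < a + b - 2*a*b := by
    nlinarith [sq_nonneg (a-b), mul_pos (mul_pos ha hb) (sub_pos.mpr hab), mul_pos ha hb]
  have hQ : 0 < a + b + 2*a*b := by nlinarith [mul_pos ha hb]
  have ha1 : (0:ℝ) < 1 + a := by linarith
  have hb1 : (0:ℝ) < 1 + b := by linarith
  have hApos : 0 < A := by rw [hA]; positivity
  have hA2 : A^2 = (a + b - 2*a*b) / (a + b + 2*a*b) := by
    rw [hA]; exact Real.sq_sqrt (by positivity)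
  have hμlt : μ < 1 := by rw [hμ, div_lt_one ha1]; linarith
  have hμgt : -1 < μ := by rw [hμ, lt_div_iff₀ ha1]; linarith
  have hνlt : ν < 1 := by rw [hν, div_lt_one hb1]; linarith
  have hνgt : -1 < ν := by rw [hν, lt_div_iff₀ hb1]; linarith
  have hμ1 : (0:ℝ) < 1 + μ := by linarith
  have hν1 : (0:ℝ) < 1 + ν := by linarith
  have hc : 0 < Real.cos (2*τ) := Real.cos_pos_of_mem_Ioo ⟨by linarith, by linarith⟩
  have hpyth : Real.sin (2*τ)^2 + Real.cos (2*τ)^2 = 1 := Real.sin_sq_add_cos_sq _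
  -- value of sin 2τ
  have hs : Real.sin (2*τ) = (a - b) / Real.sqrt ((a + b - 2*a*b) * (a + b + 2*a*b)) := by
    set D := (1+a)*(1+b) with hD
    have hDpos : 0 < D := mul_pos ha1 hb1
    have h1 : (μ + ν - 2 * μ * ν) * (2 - μ - ν)
        = (2/D)^2 * ((a + b - 2*a*b) * (a + b + 2*a*b)) := by
      rw [hμ, hν]; field_simp; ring
    have h2 : Real.sqrt ((μ + ν - 2 * μ * ν) * (2 - μ - ν))
        = (2/D) * Real.sqrt ((a + b - 2*a*b) * (a + b + 2*a*b)) := by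
      rw [h1, Real.sqrt_mul (by positivity), Real.sqrt_sq (by positivity)]
    have h3 : ν - μ = 2*(a-b)/D := by rw [hμ, hν]; field_simp; ring
    have hsq : Real.sqrt ((a + b - 2*a*b) * (a + b + 2*a*b)) ≠ 0 := by positivity
    rw [hτs, h2, h3]
    field_simp
  have hAS : A * Real.sin (2*τ) = (a - b) / (a + b + 2*a*b) := by
    rw [hA, hs, Real.sqrt_div hP.le, Real.sqrt_mul hP.le]
    have h1 : Real.sqrt (a + b - 2*a*b) ≠ 0 := by positivity
    have h3 : Real.sqrt (a + b + 2*a*b) * Real.sqrt (a + b + 2*a*b) = a + b + 2*a*b :=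
      Real.mul_self_sqrt hQ.le
    rw [div_mul_div_comm,
      show Real.sqrt (a + b + 2*a*b) * (Real.sqrt (a + b - 2*a*b) * Real.sqrt (a + b + 2*a*b))
        = Real.sqrt (a + b - 2*a*b) * (Real.sqrt (a + b + 2*a*b) * Real.sqrt (a + b + 2*a*b))
        by ring, h3, mul_div_mul_left _ _ h1]
  have hkey1 : A * (1 - μ) * Real.sin (2*τ) = A^2 - μ := by
    rw [show A * (1-μ) * Real.sin (2*τ) = (A * Real.sin (2*τ)) * (1-μ) by ring,
      hAS, hA2, hμ]
    field_simp
    ring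
  have hkey2 : A * (1 - ν) * Real.sin (2*τ) = ν - A^2 := by
    rw [show A * (1-ν) * Real.sin (2*τ) = (A * Real.sin (2*τ)) * (1-ν) by ring,
      hAS, hA2, hν]
    field_simp
    ring
  -- endpoint identities
  have hsin0 : Real.sin θ₀ ^ 2 = 1/2 - Real.cos (2*θ₀)/2 := by
    rw [Real.sin_sq, Real.cos_sq]; ring
  have id0 : μ + (1-μ) * Real.sin θ₀ ^ 2 = A * Real.sin (2*θ₀ - 2*τ) := by
    rw [hsin0, Real.sin_sub, hθ₀c, hθ₀s]
    field_simp
    linear_combination 4*hkey1 - 4*A^2*hpyth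
  have id1 : ν + (1-ν) * Real.cos θ₁ ^ 2 = A * Real.sin (2*θ₁ - 2*τ) := by
    rw [Real.cos_sq, Real.sin_sub, hθ₁c, hθ₁s]
    field_simp
    linear_combination -4*hkey2 - 4*A^2*hpyth
  -- position of θ₀, θ₁ relative to τ + π/4
  have hcθ0 : Real.cos (2*θ₀ - 2*τ) = (1-μ)*Real.cos (2*τ)/(1+μ) := by
    rw [Real.cos_sub, hθ₀c, hθ₀s]; field_simp; ring
  have hcθ1 : Real.cos (2*θ₁ - 2*τ) = (ν-1)*Real.cos (2*τ)/(1+ν) := by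
    rw [Real.cos_sub, hθ₁c, hθ₁s]; field_simp; ring
  have h0c : θ₀ < τ + π/4 := by
    by_contra h
    push_neg at h
    have h1 : π/2 ≤ 2*θ₀ - 2*τ := by linarith
    have h2 : 2*θ₀ - 2*τ ≤ π + π/2 := by linarith
    have h3 := Real.cos_nonpos_of_pi_div_two_le_of_le h1 h2
    rw [hcθ0] at h3
    have : 0 < (1-μ)*Real.cos (2*τ)/(1+μ) := div_pos (mul_pos (by linarith) hc) hμ1
    linarith
  have h1c : τ + π/4 < θ₁ := by
    by_contra h
    push_neg at h
    have h1 : -(π/2) ≤ 2*θ₁ - 2*τ := by linarith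
    have h2 : 2*θ₁ - 2*τ ≤ π/2 := by linarith
    have h3 := Real.cos_nonneg_of_mem_Icc ⟨h1, h2⟩
    rw [hcθ1] at h3
    have h4 : (ν-1)*Real.cos (2*τ)/(1+ν) < 0 := by
      apply div_neg_of_neg_of_pos _ hν1
      exact mul_neg_of_neg_of_pos (by linarith) hc
    linarith
  -- integrability
  have hcontf : Continuous fun t : ℝ => Real.exp ((n:ℝ)/2 * Real.sin (2*t - 2*τ)) := by
    fun_prop
  have hintf : ∀ u v : ℝ,
      IntervalIntegrable (fun t : ℝ => Real.exp ((n:ℝ)/2 * Real.sin (2*t - 2*τ))) volume u v :=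
    fun u v => hcontf.intervalIntegrable u v
  have hnn : (0:ℝ) ≤ (n:ℝ)/2 := by positivity
  -- lower bound for middle integral, part "left of peak"
  have hval0 : (μ + (1-μ) * Real.sin θ₀ ^ 2) * n / (2*A) = (n:ℝ)/2 * Real.sin (2*θ₀ - 2*τ) := by
    rw [id0]; field_simp
  have hval1 : (ν + (1-ν) * Real.cos θ₁ ^ 2) * n / (2*A) = (n:ℝ)/2 * Real.sin (2*θ₁ - 2*τ) := by
    rw [id1]; field_simp
  set m0 := Real.exp ((n:ℝ)/2 * Real.sin (2*θ₀ - 2*τ)) with hm0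
  set m1 := Real.exp ((n:ℝ)/2 * Real.sin (2*θ₁ - 2*τ)) with hm1
  have part1 : (τ + π/4 - θ₀) * m0 ≤ ∫ t in θ₀..(τ + π/4), Real.exp ((n:ℝ)/2 * Real.sin (2*t - 2*τ)) := by
    have := intervalIntegral.integral_mono_on (μ := volume) h0c.le
      (intervalIntegrable_const (c := m0)) (hintf θ₀ (τ + π/4)) (fun t ht => by
        rw [hm0]
        apply Real.exp_le_exp.mpr
        apply mul_le_mul_of_nonneg_left _ hnn
        apply Real.strictMonoOn_sin.monotoneOn ⟨by linarith [ht.1], by linarith [ht.2]⟩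
          ⟨by linarith [ht.1], by linarith [ht.2]⟩ (by linarith [ht.1]))
    rwa [intervalIntegral.integral_const, smul_eq_mul] at this
  have part1' : (θ₁ - (τ + π/4)) * m1 ≤ ∫ t in (τ + π/4)..θ₁, Real.exp ((n:ℝ)/2 * Real.sin (2*t - 2*τ)) := by
    have hsin_eq : ∀ w : ℝ, Real.sin w = Real.cos (w - π/2) := by
      intro w
      rw [← Real.cos_pi_div_two_sub, ← Real.cos_neg]
      ring_nf
    have := intervalIntegral.integral_mono_on (μ := volume) h1c.le
      (intervalIntegrable_const (c := m1)) (hintf (τ + π/4) θ₁) (fun t ht => by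
        rw [hm1]
        apply Real.exp_le_exp.mpr
        apply mul_le_mul_of_nonneg_left _ hnn
        rw [hsin_eq (2*θ₁ - 2*τ), hsin_eq (2*t - 2*τ)]
        exact Real.cos_le_cos_of_nonneg_of_le_pi (by linarith [ht.1]) (by linarith [ht.2])
          (by linarith [ht.2]))
    rwa [intervalIntegral.integral_const, smul_eq_mul] at this
  have hsplit : (∫ t in θ₀..(τ + π/4), Real.exp ((n:ℝ)/2 * Real.sin (2*t - 2*τ)))
      + (∫ t in (τ + π/4)..θ₁, Real.exp ((n:ℝ)/2 * Real.sin (2*t - 2*τ)))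
      = ∫ t in θ₀..θ₁, Real.exp ((n:ℝ)/2 * Real.sin (2*t - 2*τ)) :=
    intervalIntegral.integral_add_adjacent_intervals (hintf _ _) (hintf _ _)
  have hIpos0 : 0 ≤ ∫ t in (τ + π/4)..θ₁, Real.exp ((n:ℝ)/2 * Real.sin (2*t - 2*τ)) :=
    intervalIntegral.integral_nonneg h1c.le (fun u _ => (Real.exp_pos _).le)
  have hIpos1 : 0 ≤ ∫ t in θ₀..(τ + π/4), Real.exp ((n:ℝ)/2 * Real.sin (2*t - 2*τ)) :=
    intervalIntegral.integral_nonneg h0c.le (fun u _ => (Real.exp_pos _).le)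
  have hmid0 : (τ + π/4 - θ₀) * m0 ≤ ∫ t in θ₀..θ₁, Real.exp ((n:ℝ)/2 * Real.sin (2*t - 2*τ)) := by
    rw [← hsplit]; linarith
  have hmid1 : (θ₁ - (τ + π/4)) * m1 ≤ ∫ t in θ₀..θ₁, Real.exp ((n:ℝ)/2 * Real.sin (2*t - 2*τ)) := by
    rw [← hsplit]; linarith
  constructor
  · -- first inequality
    have e1a : (∫ t in (0:ℝ)..θ₀,
        Real.exp ((μ + (1 - μ) * Real.sin t ^ 2) * n / (2 * A))) ≤ θ₀ * m0 := by
      have := intervalIntegral.integral_mono_on (μ := volume) hθ₀l.le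
        ((by fun_prop : Continuous fun t : ℝ =>
          Real.exp ((μ + (1 - μ) * Real.sin t ^ 2) * n / (2 * A))).intervalIntegrable 0 θ₀)
        (intervalIntegrable_const (c := m0)) (fun t ht => by
          rw [hm0, ← hval0]
          apply Real.exp_le_exp.mpr
          apply (div_le_div_iff_of_pos_right (by positivity : (0:ℝ) < 2*A)).mpr
          apply mul_le_mul_of_nonneg_right _ (Nat.cast_nonneg n)
          apply add_le_add_right
          apply mul_le_mul_of_nonneg_left _ (by linarith : (0:ℝ) ≤ 1 - μ)
          have hst : Real.sin t ^ 2 ≤ Real.sin θ₀ ^ 2 := by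
            have h1 : 0 ≤ Real.sin t :=
              Real.sin_nonneg_of_nonneg_of_le_pi ht.1 (by linarith [ht.2])
            have h2 : Real.sin t ≤ Real.sin θ₀ :=
              Real.strictMonoOn_sin.monotoneOn ⟨by linarith [ht.1], by linarith [ht.2]⟩
                ⟨by linarith, by linarith⟩ ht.2
            exact pow_le_pow_left₀ h1 h2 2
          exact hst
        )
      rwa [intervalIntegral.integral_const, smul_eq_mul, sub_zero] at this
    have hpos : 0 < τ + π/4 - θ₀ := by linarith
    calc (∫ t in (0:ℝ)..θ₀, Real.exp ((μ + (1 - μ) * Real.sin t ^ 2) * n / (2 * A)))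
        ≤ θ₀ * m0 := e1a
      _ = (θ₀ / (τ + π/4 - θ₀)) * ((τ + π/4 - θ₀) * m0) := by
          rw [div_mul_eq_mul_div, mul_div_assoc, mul_div_cancel_left₀ m0 (ne_of_gt hpos)]
      _ ≤ (θ₀ / (τ + π/4 - θ₀)) * ∫ t in θ₀..θ₁, Real.exp ((n:ℝ)/2 * Real.sin (2*t - 2*τ)) :=
          mul_le_mul_of_nonneg_left hmid0 (by positivity)
  · -- second inequality
    have e2a : (∫ t in θ₁..(π/2),
        Real.exp ((ν + (1 - ν) * Real.cos t ^ 2) * n / (2 * A))) ≤ (π/2 - θ₁) * m1 := by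
      have := intervalIntegral.integral_mono_on (μ := volume) hθ₁r.le
        ((by fun_prop : Continuous fun t : ℝ =>
          Real.exp ((ν + (1 - ν) * Real.cos t ^ 2) * n / (2 * A))).intervalIntegrable θ₁ (π/2))
        (intervalIntegrable_const (c := m1)) (fun t ht => by
          rw [hm1, ← hval1]
          apply Real.exp_le_exp.mpr
          apply (div_le_div_iff_of_pos_right (by positivity : (0:ℝ) < 2*A)).mpr
          apply mul_le_mul_of_nonneg_right _ (Nat.cast_nonneg n)
          apply add_le_add_right
          apply mul_le_mul_of_nonneg_left _ (by linarith : (0:ℝ) ≤ 1 - ν)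
          have hst : Real.cos t ^ 2 ≤ Real.cos θ₁ ^ 2 := by
            have h1 : 0 ≤ Real.cos t :=
              Real.cos_nonneg_of_mem_Icc ⟨by linarith [ht.1], ht.2⟩
            have h2 : Real.cos t ≤ Real.cos θ₁ :=
              Real.cos_le_cos_of_nonneg_of_le_pi hθ₁l.le (by linarith [ht.2]) ht.1
            exact pow_le_pow_left₀ h1 h2 2
          exact hst
        )
      rwa [intervalIntegral.integral_const, smul_eq_mul] at this
    have hpos : 0 < θ₁ - (τ + π/4) := by linarith
    calc (∫ t in θ₁..(π/2), Real.exp ((ν + (1 - ν) * Real.cos t ^ 2) * n / (2 * A)))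
        ≤ (π/2 - θ₁) * m1 := e2a
      _ = ((π/2 - θ₁) / (θ₁ - τ - π/4)) * ((θ₁ - (τ + π/4)) * m1) := by
          rw [show θ₁ - τ - π/4 = θ₁ - (τ + π/4) by ring,
            div_mul_eq_mul_div, mul_div_assoc, mul_div_cancel_left₀ m1 (ne_of_gt hpos)]
      _ ≤ ((π/2 - θ₁) / (θ₁ - τ - π/4)) * ∫ t in θ₀..θ₁, Real.exp ((n:ℝ)/2 * Real.sin (2*t - 2*τ)) := by
          apply mul_le_mul_of_nonneg_left hmid1
          apply div_nonneg (by linarith)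
          linarith
end

section
/- Let c ∈ ℂ with Re c > −1 and let f(x) = e^{−c x²/2}. Then for every w ∈ ℂ, Bf(w) = √(2/(1+c)) · exp(((1−c)/(1+c)) w²/4), where the square root is the principal branch. In particular, if c = (1 + iA e^{−2iτ})/(1 − iA e^{−2iτ}) with A ∈ (0,1) and τ ∈ ℝ, then Bf(w) = √(1 − iA e^{−2iτ}) · exp(−iA e^{−2iτ} w²/4). -/
open MeasureTheory Real Set

open Complex in
lemma auxA {r : ℝ} (hr : 0 < r) {z : ℂ} (hz : z ≠ 0) :
    ((r : ℂ) * z) ^ ((1:ℂ)/2) = (Real.sqrt r : ℂ) * z ^ ((1:ℂ)/2) := by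
  have hrz : (r : ℂ) * z ≠ 0 := mul_ne_zero (by exact_mod_cast hr.ne') hz
  rw [Complex.cpow_def_of_ne_zero hrz, Complex.cpow_def_of_ne_zero hz,
    Complex.log_ofReal_mul hr hz, add_mul, Complex.exp_add]
  congr 1
  rw [Real.sqrt_eq_rpow, Real.rpow_def_of_pos hr, Complex.ofReal_exp]
  push_cast
  ring_nf

lemma part1 (c : ℂ) (hc : -1 < c.re) (w : ℂ) :
    bargmann (fun x => Complex.exp (-c * (x : ℂ) ^ 2 / 2)) w =
      (2 / (1 + c)) ^ ((1 : ℂ) / 2) *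
        Complex.exp ((1 - c) / (1 + c) * w ^ 2 / 4) := by
  have h1c : (1 + c) ≠ 0 := by
    intro h
    have : (1 + c).re = 0 := by rw [h]; simp
    simp [Complex.add_re] at this
    linarith
  have hb : (-(1 + c) / 2).re < 0 := by
    simp [Complex.div_re, Complex.neg_re, Complex.add_re]
    linarith
  have key : (∫ x : ℝ, Complex.exp ((x : ℂ) * w - (x : ℂ) ^ 2 / 2) *
      Complex.exp (-c * (x : ℂ) ^ 2 / 2)) =
      ((Real.pi : ℂ) / -(-(1 + c) / 2)) ^ ((1:ℂ) / 2) *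
        Complex.exp (0 - w ^ 2 / (4 * (-(1 + c) / 2))) := by
    rw [← integral_cexp_quadratic hb w 0]
    congr 1 with x
    rw [← Complex.exp_add]
    congr 1
    ring
  rw [bargmann, key]
  have hπ : ((Real.pi : ℂ) / -(-(1 + c) / 2)) = (Real.pi : ℂ) * (2 / (1 + c)) := by
    field_simp
  have hz : (2 / (1 + c) : ℂ) ≠ 0 := div_ne_zero two_ne_zero h1c
  rw [hπ, auxA Real.pi_pos hz]
  have hsπ : (Real.sqrt Real.pi : ℂ) ≠ 0 := by
    exact_mod_cast (Real.sqrt_pos.2 Real.pi_pos).ne'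

  have hexp : -w ^ 2 / 4 + (0 - w ^ 2 / (4 * (-(1 + c) / 2))) =
      (1 - c) / (1 + c) * w ^ 2 / 4 := by
    rw [show (4 * (-(1 + c) / 2) : ℂ) = -(2 * (1 + c)) by ring, div_neg]
    field_simp
    ring
  have hE : Complex.exp (-w ^ 2 / 4) * Complex.exp (0 - w ^ 2 / (4 * (-(1 + c) / 2))) =
      Complex.exp ((1 - c) / (1 + c) * w ^ 2 / 4) := by
    rw [← Complex.exp_add, hexp]
  rw [div_mul_eq_mul_div, div_eq_iff hsπ]
  linear_combination ((Real.sqrt Real.pi : ℂ) * (2 / (1 + c)) ^ ((1:ℂ)/2)) * hE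

lemma part2 (A τ : ℝ) (hA : A ∈ Set.Ioo (0 : ℝ) 1) (w : ℂ) :
    bargmann (fun x => Complex.exp
        (-((1 + Complex.I * A * Complex.exp (-(2 * Complex.I * τ))) /
           (1 - Complex.I * A * Complex.exp (-(2 * Complex.I * τ)))) *
          (x : ℂ) ^ 2 / 2)) w =
      (1 - Complex.I * A * Complex.exp (-(2 * Complex.I * τ))) ^ ((1 : ℂ) / 2) *
        Complex.exp (-(Complex.I * A * Complex.exp (-(2 * Complex.I * τ))) *
          w ^ 2 / 4) := by
  set z : ℂ := Complex.I * A * Complex.exp (-(2 * Complex.I * τ)) with hzdef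
  have habs : ‖z‖ = A := by
    rw [hzdef]
    simp [Complex.norm_exp, abs_of_pos hA.1]
  have hzn : Complex.normSq z = A ^ 2 := by
    have := Complex.sq_norm z
    rw [habs] at this
    linarith [this]
  have hne : (1 : ℂ) - z ≠ 0 := by
    intro h
    have : z = 1 := by linear_combination -h
    rw [this] at habs
    simp at habs
    linarith [hA.2]
  set c : ℂ := (1 + z) / (1 - z) with hcdef
  have hcre : c.re = (1 - A ^ 2) / Complex.normSq (1 - z) := by
    rw [hcdef, Complex.div_re]
    have : ((1 : ℂ) + z).re * ((1 : ℂ) - z).re + ((1 : ℂ) + z).im * ((1 : ℂ) - z).im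
        = 1 - Complex.normSq z := by
      simp [Complex.normSq_apply]
      ring
    rw [← add_div, this, hzn]
  have hc : -1 < c.re := by
    rw [hcre]
    have h1 : 0 < 1 - A ^ 2 := by nlinarith [hA.1, hA.2]
    have h2 : 0 < Complex.normSq (1 - z) := Complex.normSq_pos.2 hne
    have := div_pos h1 h2
    linarith
  have h1c : (1 : ℂ) + c = 2 / (1 - z) := by
    rw [hcdef]
    field_simp
    ring
  have e1 : (2 : ℂ) / (1 + c) = 1 - z := by
    rw [h1c]
    field_simp
  have e2 : ((1 : ℂ) - c) / (1 + c) = -z := by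
    rw [h1c, hcdef]
    field_simp
    ring
  have := part1 c hc w
  rw [e1, e2] at this
  exact this

theorem stmt17 :
    (∀ c : ℂ, -1 < c.re → ∀ w : ℂ,
      bargmann (fun x => Complex.exp (-c * (x : ℂ) ^ 2 / 2)) w =
        (2 / (1 + c)) ^ ((1 : ℂ) / 2) *
          Complex.exp ((1 - c) / (1 + c) * w ^ 2 / 4)) ∧
    (∀ A τ : ℝ, A ∈ Set.Ioo (0 : ℝ) 1 → ∀ w : ℂ,
      bargmann (fun x => Complex.exp
          (-((1 + Complex.I * A * Complex.exp (-(2 * Complex.I * τ))) /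
             (1 - Complex.I * A * Complex.exp (-(2 * Complex.I * τ)))) *
            (x : ℂ) ^ 2 / 2)) w =
        (1 - Complex.I * A * Complex.exp (-(2 * Complex.I * τ))) ^ ((1 : ℂ) / 2) *
          Complex.exp (-(Complex.I * A * Complex.exp (-(2 * Complex.I * τ))) *
            w ^ 2 / 4)) := by
  exact ⟨part1, part2⟩
end

section
/- Let a, b > 0 with ab < 1, let z = iA e^{−2iτ}, and let f(x) = exp(−((1+z)/(1−z)) x²/2). Then Re((1+z)/(1−z)) = a and Re((1−z)/(1+z)) = b; consequently |f(x)| = e^{−a x²/2} for all x ∈ ℝ, |Ff(ξ)| = (b/a)^{1/4} e^{−b ξ²/2} for all ξ ∈ ℝ, and f ∈ E(a,b). -/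
open MeasureTheory Real Set

set_option maxHeartbeats 2000000 in
theorem stmt18 (a b : ℝ) (ha : 0 < a) (hb : 0 < b) (hab : a * b < 1)
    (μ ν A τ : ℝ) (hμ : μ = (1 - a) / (1 + a)) (hν : ν = (1 - b) / (1 + b))
    (hA : A = Real.sqrt ((a + b - 2 * a * b) / (a + b + 2 * a * b)))
    (hτ : τ ∈ Set.Ioo (-(π / 4)) (π / 4))
    (hτs : Real.sin (2 * τ)
      = (ν - μ) / Real.sqrt ((μ + ν - 2 * μ * ν) * (2 - μ - ν)))
    (z : ℂ) (hz : z = Complex.I * A * Complex.exp (-(2 * Complex.I * τ)))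
    (f : ℝ → ℂ) (hf : f = fun x : ℝ => Complex.exp (-((1 + z) / (1 - z)) * (x : ℂ) ^ 2 / 2)) :
    ((1 + z) / (1 - z)).re = a ∧ ((1 - z) / (1 + z)).re = b ∧
    (∀ x : ℝ, ‖f x‖ = Real.exp (-a * x ^ 2 / 2)) ∧
    (∀ ξ : ℝ, ‖fourierT f ξ‖
      = (b / a) ^ ((1 : ℝ) / 4) * Real.exp (-b * ξ ^ 2 / 2)) ∧
    memE a b f := by
  -- positivity of P and Q
  have hP : 0 < a + b - 2*a*b := by
    nlinarith [mul_pos (add_pos ha hb) (sub_pos.mpr hab),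
      mul_nonneg ha.le (sq_nonneg (1-b)), mul_nonneg hb.le (sq_nonneg (1-a))]
  have hQ : 0 < a + b + 2*a*b := by positivity
  have hQ0 : (a + b + 2*a*b) ≠ 0 := ne_of_gt hQ
  -- sin(2τ) in terms of a, b
  have hs : Real.sin (2*τ) = (a - b) / Real.sqrt ((a + b - 2*a*b) * (a + b + 2*a*b)) := by
    rw [hτs]
    have hDa : (0:ℝ) < 1 + a := by linarith
    have hDb : (0:ℝ) < 1 + b := by linarith
    have e1 : ν - μ = 2*(a-b)/((1+a)*(1+b)) := by
      rw [hμ, hν]; field_simp; ring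
    have e2 : (μ + ν - 2 * μ * ν) * (2 - μ - ν)
        = (2/((1+a)*(1+b)))^2 * ((a + b - 2*a*b) * (a + b + 2*a*b)) := by
      rw [hμ, hν]; field_simp; ring
    have e3 : Real.sqrt ((μ + ν - 2 * μ * ν) * (2 - μ - ν))
        = (2/((1+a)*(1+b))) * Real.sqrt ((a + b - 2*a*b) * (a + b + 2*a*b)) := by
      rw [e2, Real.sqrt_mul (sq_nonneg _), Real.sqrt_sq (by positivity)]
    rw [e1, e3]
    have hsq : 0 < Real.sqrt ((a + b - 2*a*b) * (a + b + 2*a*b)) :=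
      Real.sqrt_pos.mpr (by positivity)
    field_simp
  -- A * sin(2τ)
  have hAs : A * Real.sin (2*τ) = (a-b)/(a + b + 2*a*b) := by
    rw [hs]
    have h1 : Real.sqrt ((a + b - 2*a*b)*(a + b + 2*a*b))
        = Real.sqrt (a + b - 2*a*b) * Real.sqrt (a + b + 2*a*b) := Real.sqrt_mul hP.le _
    have h2 : A = Real.sqrt (a + b - 2*a*b) / Real.sqrt (a + b + 2*a*b) := by
      rw [hA, Real.sqrt_div hP.le]
    have hsP : 0 < Real.sqrt (a + b - 2*a*b) := Real.sqrt_pos.mpr hP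
    have hsQ : 0 < Real.sqrt (a + b + 2*a*b) := Real.sqrt_pos.mpr hQ
    have hQQ : Real.sqrt (a + b + 2*a*b) * Real.sqrt (a + b + 2*a*b) = a + b + 2*a*b :=
      Real.mul_self_sqrt hQ.le
    rw [h2, h1, show Real.sqrt (a + b - 2*a*b) / Real.sqrt (a + b + 2*a*b) *
        ((a - b) / (Real.sqrt (a + b - 2*a*b) * Real.sqrt (a + b + 2*a*b)))
        = (a - b) / (Real.sqrt (a + b + 2*a*b) * Real.sqrt (a + b + 2*a*b)) by
          rw [div_mul_div_comm, mul_left_comm (Real.sqrt (a + b + 2*a*b)),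
            mul_div_mul_left _ _ hsP.ne'], hQQ]
  -- components of z
  have hzre : z.re = A * Real.sin (2*τ) := by
    rw [hz]; simp [Complex.exp_re, Complex.exp_im, Complex.mul_re, Complex.mul_im, mul_comm]
  have hzim : z.im = A * Real.cos (2*τ) := by
    rw [hz]; simp [Complex.exp_re, Complex.exp_im, Complex.mul_re, Complex.mul_im, mul_comm]
  have hA2 : A^2 = (a + b - 2*a*b)/(a + b + 2*a*b) := by
    rw [hA]; exact Real.sq_sqrt (by positivity)
  have hu : z.re = (a-b)/(a + b + 2*a*b) := by rw [hzre, hAs]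
  have hv : z.im^2 = (a + b - 2*a*b)/(a + b + 2*a*b) - ((a-b)/(a + b + 2*a*b))^2 := by
    have hsc := Real.sin_sq_add_cos_sq (2*τ)
    rw [hzim]
    have : (A * Real.cos (2*τ))^2 = A^2 - (A * Real.sin (2*τ))^2 := by nlinarith [hsc]
    rw [this, hA2, hAs]
  -- normSq of 1 ± z
  have hd1 : Complex.normSq (1 - z) = 4*b/(a + b + 2*a*b) := by
    rw [Complex.normSq_apply]
    simp only [Complex.sub_re, Complex.sub_im, Complex.one_re, Complex.one_im]
    rw [show (0 - z.im) * (0 - z.im) = z.im^2 by ring, hv, hu]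
    field_simp; ring
  have hd2 : Complex.normSq (1 + z) = 4*a/(a + b + 2*a*b) := by
    rw [Complex.normSq_apply]
    simp only [Complex.add_re, Complex.add_im, Complex.one_re, Complex.one_im]
    rw [show (0 + z.im) * (0 + z.im) = z.im^2 by ring, hv, hu]
    field_simp; ring
  -- real parts
  have hre1 : ((1 + z) / (1 - z)).re = a := by
    rw [Complex.div_re, hd1]
    simp only [Complex.add_re, Complex.sub_re, Complex.add_im, Complex.sub_im,
      Complex.one_re, Complex.one_im]
    rw [show (0 + z.im) * (0 - z.im) = -(z.im^2) by ring, hv, hu]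
    field_simp
    ring
  have hre2 : ((1 - z) / (1 + z)).re = b := by
    rw [Complex.div_re, hd2]
    simp only [Complex.add_re, Complex.sub_re, Complex.add_im, Complex.sub_im,
      Complex.one_re, Complex.one_im]
    rw [show (0 - z.im) * (0 + z.im) = -(z.im^2) by ring, hv, hu]
    field_simp
    ring
  -- nonvanishing
  have h1z : (1 - z) ≠ 0 := by
    intro h
    rw [h, map_zero] at hd1
    have : (0:ℝ) < 4*b/(a + b + 2*a*b) := by positivity
    linarith
  have h1z' : (1 + z) ≠ 0 := by
    intro h
    rw [h, map_zero] at hd2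
    have : (0:ℝ) < 4*a/(a + b + 2*a*b) := by positivity
    linarith
  set c : ℂ := (1 + z) / (1 - z) with hc
  have hcinv : (c⁻¹).re = b := by
    rw [hc, inv_div]
    exact hre2
  have hc0 : c ≠ 0 := div_ne_zero h1z' h1z
  have hc2re : (0:ℝ) < (c/2).re := by
    have h : ∀ w : ℂ, (w/2).re = w.re/2 := fun w => by
      simp [Complex.div_re, Complex.normSq_apply]
    rw [h, hre1]; linarith
  have hns : Complex.normSq c = a / b := by
    have hinv := Complex.inv_re c
    rw [hcinv, hre1] at hinv
    have hn0 : Complex.normSq c ≠ 0 := by simpa [Complex.normSq_eq_zero] using hc0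
    field_simp at hinv ⊢
    linarith
  -- |f x|
  have habsf : ∀ x : ℝ, ‖f x‖ = Real.exp (-a * x ^ 2 / 2) := by
    intro x
    rw [hf]
    simp only
    rw [Complex.norm_exp]
    congr 1
    have he : -c * (x:ℂ)^2/2 = ((x^2/2 : ℝ):ℂ) * (-c) := by push_cast; ring
    rw [he, Complex.re_ofReal_mul]
    simp [hre1]; ring
  -- Fourier transform value
  have key : ∀ ξ : ℝ, fourierT f ξ
      = (1 / Real.sqrt (2 * Real.pi) : ℝ) *
        ((Real.pi / (c/2)) ^ (1/2 : ℂ) * Complex.exp (-(-ξ:ℂ)^2 / (4 * (c/2)))) := by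
    intro ξ
    rw [fourierT, hf]
    congr 1
    rw [← fourierIntegral_gaussian hc2re (-ξ:ℂ)]
    congr 1
    funext x
    rw [← Complex.exp_add, ← Complex.exp_add]
    congr 1
    ring
  have habsF : ∀ ξ : ℝ, ‖fourierT f ξ‖
      = (b / a) ^ ((1 : ℝ) / 4) * Real.exp (-b * ξ ^ 2 / 2) := by
    intro ξ
    rw [key ξ]
    have habsc : ‖c‖ = Real.sqrt (a/b) := by
      rw [Complex.norm_def, hns]
    have h2π : (0:ℝ) < Real.sqrt (2*Real.pi) := Real.sqrt_pos.mpr (by positivity)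
    have hexp : (-(-ξ:ℂ)^2 / (4 * (c/2))).re = -b * ξ^2/2 := by
      have he : -(-ξ:ℂ)^2 / (4 * (c/2)) = ((-(ξ^2)/2 : ℝ) : ℂ) * c⁻¹ := by
        push_cast
        field_simp
        ring
      rw [he, Complex.re_ofReal_mul, hcinv]
      ring
    have hpow : ‖(Real.pi / (c/2)) ^ (1/2 : ℂ)‖
        = Real.sqrt (2*Real.pi) / (a/b) ^ ((1:ℝ)/4) := by
      have h12 : (1/2 : ℂ) = ((1/2 : ℝ) : ℂ) := by norm_num
      rw [h12, Complex.norm_cpow_real]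
      have habsd : ‖(Real.pi / (c/2) : ℂ)‖ = 2 * Real.pi / Real.sqrt (a/b) := by
        rw [norm_div, norm_div, habsc]
        simp [Complex.norm_real, abs_of_pos Real.pi_pos]
        ring
      rw [habsd, Real.div_rpow (by positivity) (Real.sqrt_nonneg _)]
      congr 1
      · rw [Real.sqrt_eq_rpow]
      · rw [Real.sqrt_eq_rpow, ← Real.rpow_mul (by positivity)]
        norm_num
    rw [norm_mul, norm_mul, Complex.norm_exp, hexp, hpow]
    rw [Complex.norm_real, Real.norm_eq_abs, abs_of_pos (by positivity : (0:ℝ) < 1 / Real.sqrt (2*Real.pi))]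
    have hba : (b/a : ℝ) ^ ((1:ℝ)/4) = ((a/b) ^ ((1:ℝ)/4))⁻¹ := by
      rw [← Real.inv_rpow (by positivity), inv_div]
    rw [hba]
    have h4 : ((a/b:ℝ)) ^ ((1:ℝ)/4) ≠ 0 := by positivity
    field_simp
  refine ⟨hre1, hre2, habsf, habsF, ?_, max 1 ((b / a) ^ ((1 : ℝ) / 4)), ?_, ?_⟩
  · have hfe : f = fun x : ℝ => Complex.exp (-(c/2) * (x:ℂ)^2) := by
      rw [hf]
      funext x
      congr 1
      ring
    rw [hfe]
    exact integrable_cexp_neg_mul_sq hc2re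
  · intro x
    rw [habsf x]
    have := Real.exp_pos (-a * x ^ 2 / 2)
    nlinarith [le_max_left (1:ℝ) ((b / a) ^ ((1 : ℝ) / 4))]
  · intro ξ
    rw [habsF ξ]
    have := Real.exp_pos (-b * ξ ^ 2 / 2)
    nlinarith [le_max_right (1:ℝ) ((b / a) ^ ((1 : ℝ) / 4))]
end

section
/- Let a, b > 0 with ab < 1, let z = iA e^{−2iτ}, and let f(x) = exp(−((1+z)/(1−z)) x²/2). Then ⟨f, φ_n⟩ = 0 for every odd n, and there exist constants 0 < c₁ ≤ c₂ such that for every even integer n ≥ 2, c₁ n^{−1/4} A^{n/2} ≤ |⟨f, φ_n⟩| ≤ c₂ n^{−1/4} A^{n/2}. In particular, the exponential rate A^{n/2} = ((a+b−2ab)/(a+b+2ab))^{n/4} in the Hermite coefficient estimate for E(a,b) is sharp. -/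
open MeasureTheory Real Set

open MeasureTheory Real Set Polynomial Filter

noncomputable def PH : ℕ → Polynomial ℝ
  | 0 => 1
  | n+1 => C 2 * X * PH n - derivative (PH n)

lemma gauss_hasDerivAt (x : ℝ) :
    HasDerivAt (fun y : ℝ => Real.exp (-y ^ 2)) (-(2*x) * Real.exp (-x ^ 2)) x := by
  have h : HasDerivAt (fun y : ℝ => -y ^ 2) (-(2*x)) x := by
    simpa using ((hasDerivAt_pow 2 x).fun_neg)
  simpa [mul_comm] using h.exp

lemma PH_iteratedDeriv (n : ℕ) (x : ℝ) :
    iteratedDeriv n (fun y => Real.exp (-y ^ 2)) x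
      = (-1) ^ n * (PH n).eval x * Real.exp (-x ^ 2) := by
  induction n generalizing x with
  | zero => simp [PH]
  | succ n ih =>
    rw [iteratedDeriv_succ]
    have hfun : iteratedDeriv n (fun y => Real.exp (-y ^ 2))
        = fun x => (-1) ^ n * ((PH n).eval x * Real.exp (-x ^ 2)) :=
      funext fun x => by rw [ih]; ring
    rw [hfun]
    have hd := ((((PH n).hasDerivAt x).fun_mul (gauss_hasDerivAt x)).const_mul ((-1 : ℝ)^n)).deriv
    rw [hd]
    have : (PH (n+1)).eval x = 2 * x * (PH n).eval x - (PH n).derivative.eval x := by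
      simp [PH]
    rw [this]
    ring

lemma physHermite_eq (n : ℕ) (x : ℝ) : physHermite n x = (PH n).eval x := by
  rw [physHermite, PH_iteratedDeriv]
  have h1 : Real.exp (x^2) * Real.exp (-x^2) = 1 := by
    rw [← Real.exp_add]; simp
  have h2 : ((-1:ℝ))^n * (-1)^n = 1 := by
    simp [← mul_pow]
  calc (-1) ^ n * Real.exp (x ^ 2) * ((-1) ^ n * (PH n).eval x * Real.exp (-x ^ 2))
      = ((-1:ℝ))^n * (-1)^n * (Real.exp (x^2) * Real.exp (-x^2)) * (PH n).eval x := by ring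
    _ = (PH n).eval x := by rw [h1, h2]; try ring

lemma PH_derivative (n : ℕ) :
    derivative (PH (n+1)) = Polynomial.C (2*(n:ℝ)+2) * PH n := by
  induction n with
  | zero => simp [PH]; try ring
  | succ n ih =>
    have : PH (n+2) = C 2 * X * PH (n+1) - derivative (PH (n+1)) := rfl
    rw [this, ih]
    rw [derivative_sub, derivative_mul, derivative_mul, ih]
    have hPH1 : PH (n+1) = C 2 * X * PH n - derivative (PH n) := rfl
    rw [derivative_mul]
    simp only [derivative_C, derivative_X]
    have hC : (C (2*((n:ℝ)+1)+2) : Polynomial ℝ) = C (2*(n:ℝ)+2) + C 2 := by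
      rw [← C_add]; ring_nf
    push_cast
    rw [hC, hPH1]
    ring

lemma PH_comp_neg (n : ℕ) : (PH n).comp (-X) = (-1)^n * PH n := by
  induction n with
  | zero => simp [PH]
  | succ n ih =>
    have h : PH (n+1) = C 2 * X * PH n - derivative (PH n) := rfl
    have hD : (derivative (PH n)).comp (-X) = -derivative ((PH n).comp (-X)) := by
      rw [derivative_comp]
      simp
    rw [h, sub_comp, mul_comp, mul_comp, C_comp, X_comp, hD, ih]
    have hd1 : derivative ((-1 : Polynomial ℝ)^n * PH n) = (-1)^n * derivative (PH n) := by
      simp [derivative_mul, derivative_pow]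
    rw [hd1, pow_succ]
    ring

lemma pow_exp_bound {b : ℝ} (hb : 0 < b) (i : ℕ) (x : ℝ) :
    |x| ^ i * Real.exp (-b * x ^ 2)
      ≤ (1 + i.factorial * (2/b)^i) * Real.exp (-(b/2) * x ^ 2) := by
  have h1 : |x| ^ i ≤ 1 + (x^2)^i := by
    rcases le_total (|x|) 1 with h | h
    · have h0 : |x|^i ≤ 1 := pow_le_one₀ (abs_nonneg x) h
      have h2 : (0:ℝ) ≤ (x^2)^i := by positivity
      linarith
    · have h0 : |x|^i ≤ (x^2)^i := by
        apply pow_le_pow_left₀ (abs_nonneg x)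
        rw [← sq_abs]
        nlinarith [abs_nonneg x]
      have : (0:ℝ) ≤ 1 := one_pos.le
      linarith
  have h4 : (x^2)^i ≤ (i.factorial : ℝ) * (2/b)^i * Real.exp ((b/2)*x^2) := by
    have h3 := Real.pow_div_factorial_le_exp (x := (b/2)*x^2) (by positivity) i
    rw [div_le_iff₀ (show (0:ℝ) < (i.factorial:ℝ) by positivity)] at h3
    rw [mul_pow] at h3
    have h5 := mul_le_mul_of_nonneg_left h3 (show (0:ℝ) ≤ (2/b)^i by positivity)
    have hone : ((2:ℝ)/b)^i * (b/2)^i = 1 := by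
      rw [← mul_pow]
      have : (2/b) * (b/2) = (1:ℝ) := by field_simp
      rw [this, one_pow]
    calc (x^2)^i = (2/b)^i * (b/2)^i * (x^2)^i := by rw [hone, one_mul]
      _ = (2/b)^i * ((b/2)^i * (x^2)^i) := by ring
      _ ≤ (2/b)^i * (Real.exp ((b/2)*x^2) * i.factorial) := h5
      _ = (i.factorial : ℝ) * (2/b)^i * Real.exp ((b/2)*x^2) := by ring
  have hee : Real.exp (-b*x^2) ≤ Real.exp (-(b/2)*x^2) := by
    apply Real.exp_le_exp.2; nlinarith [sq_nonneg x]
  calc |x|^i * Real.exp (-b*x^2) ≤ (1 + (x^2)^i) * Real.exp (-b*x^2) :=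
        mul_le_mul_of_nonneg_right h1 (Real.exp_pos _).le
    _ = Real.exp (-b*x^2) + (x^2)^i * Real.exp (-b*x^2) := by ring
    _ ≤ Real.exp (-(b/2)*x^2)
        + ((i.factorial : ℝ) * (2/b)^i * Real.exp ((b/2)*x^2)) * Real.exp (-b*x^2) := by
        gcongr
    _ = (1 + i.factorial * (2/b)^i) * Real.exp (-(b/2)*x^2) := by
        rw [mul_assoc, ← Real.exp_add]
        ring_nf
  
lemma tendsto_exp_neg_sq_atTop {b : ℝ} (hb : 0 < b) :
    Tendsto (fun x : ℝ => Real.exp (-b * x^2)) atTop (nhds 0) := by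
  apply Real.tendsto_exp_atBot.comp
  have h1 : Tendsto (fun x : ℝ => x^2) atTop atTop :=
    tendsto_pow_atTop (two_ne_zero)
  have h2 := h1.const_mul_atTop hb
  have : (fun x : ℝ => -b * x^2) = fun x => -(b * x^2) := by funext x; ring
  rw [this]
  exact tendsto_neg_atBot_iff.mpr h2

lemma tendsto_exp_neg_sq_atBot {b : ℝ} (hb : 0 < b) :
    Tendsto (fun x : ℝ => Real.exp (-b * x^2)) atBot (nhds 0) := by
  have h := (tendsto_exp_neg_sq_atTop hb).comp tendsto_neg_atBot_atTop
  simpa [Function.comp_def] using h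

lemma norm_poly_cexp (p : Polynomial ℝ) (q : ℂ) (x : ℝ) :
    ‖((p.eval x : ℝ) : ℂ) * Complex.exp (-q * x^2)‖ = |p.eval x| * Real.exp (-q.re * x^2) := by
  rw [norm_mul, Complex.norm_exp, Complex.norm_real, Real.norm_eq_abs]
  congr 2
  simp [Complex.mul_re, ← Complex.ofReal_pow]

lemma abs_poly_le (p : Polynomial ℝ) (x : ℝ) :
    |p.eval x| ≤ ∑ i ∈ Finset.range (p.natDegree + 1), |p.coeff i| * |x|^i := by
  conv_lhs => rw [Polynomial.eval_eq_sum_range]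
  refine (Finset.abs_sum_le_sum_abs _ _).trans ?_
  apply Finset.sum_le_sum
  intro i _
  rw [abs_mul, abs_pow]

lemma poly_cexp_bound (p : Polynomial ℝ) {q : ℂ} (hq : 0 < q.re) (x : ℝ) :
    ‖((p.eval x : ℝ) : ℂ) * Complex.exp (-q * x^2)‖
      ≤ (∑ i ∈ Finset.range (p.natDegree + 1),
          |p.coeff i| * (1 + i.factorial * (2/q.re)^i)) * Real.exp (-(q.re/2) * x^2) := by
  rw [norm_poly_cexp]
  calc |p.eval x| * Real.exp (-q.re * x^2)
      ≤ (∑ i ∈ Finset.range (p.natDegree + 1), |p.coeff i| * |x|^i) * Real.exp (-q.re * x^2) :=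
        mul_le_mul_of_nonneg_right (abs_poly_le p x) (Real.exp_pos _).le
    _ = ∑ i ∈ Finset.range (p.natDegree + 1), |p.coeff i| * (|x|^i * Real.exp (-q.re * x^2)) := by
        rw [Finset.sum_mul]; congr 1; funext i; ring
    _ ≤ ∑ i ∈ Finset.range (p.natDegree + 1),
          |p.coeff i| * ((1 + i.factorial * (2/q.re)^i) * Real.exp (-(q.re/2) * x^2)) := by
        apply Finset.sum_le_sum
        intro i _
        exact mul_le_mul_of_nonneg_left (pow_exp_bound hq i x) (abs_nonneg _)
    _ = (∑ i ∈ Finset.range (p.natDegree + 1),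
          |p.coeff i| * (1 + i.factorial * (2/q.re)^i)) * Real.exp (-(q.re/2) * x^2) := by
        rw [Finset.sum_mul]; congr 1; funext i; ring

lemma continuous_poly_cexp (p : Polynomial ℝ) (q : ℂ) :
    Continuous (fun x : ℝ => ((p.eval x : ℝ) : ℂ) * Complex.exp (-q * x^2)) := by
  apply Continuous.mul
  · exact Complex.continuous_ofReal.comp p.continuous
  · exact Complex.continuous_exp.comp
      ((continuous_const.mul ((Complex.continuous_ofReal.pow 2))))

lemma integrable_poly_cexp (p : Polynomial ℝ) {q : ℂ} (hq : 0 < q.re) :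
    Integrable (fun x : ℝ => ((p.eval x : ℝ) : ℂ) * Complex.exp (-q * x^2)) := by
  have hb2 : 0 < q.re/2 := by linarith
  apply Integrable.mono' ((integrable_exp_neg_mul_sq hb2).const_mul
    (∑ i ∈ Finset.range (p.natDegree + 1), |p.coeff i| * (1 + i.factorial * (2/q.re)^i)))
  · exact (continuous_poly_cexp p q).aestronglyMeasurable
  · exact Filter.Eventually.of_forall (fun x => poly_cexp_bound p hq x)

lemma tendsto_poly_cexp_atTop (p : Polynomial ℝ) {q : ℂ} (hq : 0 < q.re) :
    Filter.Tendsto (fun x : ℝ => ((p.eval x : ℝ) : ℂ) * Complex.exp (-q * x^2))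
      Filter.atTop (nhds 0) := by
  apply squeeze_zero_norm (poly_cexp_bound p hq)
  have h := (tendsto_exp_neg_sq_atTop (show 0 < q.re/2 by linarith)).const_mul
    (∑ i ∈ Finset.range (p.natDegree + 1), |p.coeff i| * (1 + i.factorial * (2/q.re)^i))
  simpa using h

lemma tendsto_poly_cexp_atBot (p : Polynomial ℝ) {q : ℂ} (hq : 0 < q.re) :
    Filter.Tendsto (fun x : ℝ => ((p.eval x : ℝ) : ℂ) * Complex.exp (-q * x^2))
      Filter.atBot (nhds 0) := by
  apply squeeze_zero_norm (poly_cexp_bound p hq)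
  have h := (tendsto_exp_neg_sq_atBot (show 0 < q.re/2 by linarith)).const_mul
    (∑ i ∈ Finset.range (p.natDegree + 1), |p.coeff i| * (1 + i.factorial * (2/q.re)^i))
  simpa using h

lemma integral_hasDerivAt_zero (F F' : ℝ → ℂ) (hF : ∀ x, HasDerivAt F (F' x) x)
    (hInt : Integrable F') (htop : Tendsto F atTop (nhds 0))
    (hbot : Tendsto F atBot (nhds 0)) : ∫ x : ℝ, F' x = 0 := by
  have h1 : ∀ R : ℝ, ∫ x in (-R)..R, F' x = F R - F (-R) := fun R =>
    intervalIntegral.integral_eq_sub_of_hasDerivAt (fun x _ => hF x) hInt.intervalIntegrable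
  have h2 : Tendsto (fun R : ℝ => ∫ x in (-R)..R, F' x) atTop (nhds (∫ x : ℝ, F' x)) :=
    intervalIntegral_tendsto_integral hInt tendsto_neg_atTop_atBot tendsto_id
  have h3 : Tendsto (fun R : ℝ => F R - F (-R)) atTop (nhds (0 - 0)) :=
    (htop.comp tendsto_id).sub (hbot.comp tendsto_neg_atTop_atBot)
  rw [funext h1] at h2
  simp only [sub_zero] at h3
  exact tendsto_nhds_unique h2 h3

lemma hasDerivAt_poly_cexp (p : Polynomial ℝ) (q : ℂ) (x : ℝ) :
    HasDerivAt (fun x : ℝ => ((p.eval x : ℝ) : ℂ) * Complex.exp (-q * x^2))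
      ((((p.derivative.eval x : ℝ) : ℂ) - 2*q*x*((p.eval x : ℝ) : ℂ))
        * Complex.exp (-q * x^2)) x := by
  have h1 : HasDerivAt (fun x : ℝ => ((p.eval x : ℝ) : ℂ)) ((p.derivative.eval x : ℝ) : ℂ) x :=
    (p.hasDerivAt x).ofReal_comp
  have h2 : HasDerivAt (fun x : ℝ => Complex.exp (-q * (x:ℂ)^2))
      (Complex.exp (-q * (x:ℂ)^2) * (-q * (2*x))) x := by
    have hx : HasDerivAt (fun x : ℝ => ((x:ℂ)^2)) ((2*x : ℝ) : ℂ) x := by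
      have := (hasDerivAt_pow 2 x).ofReal_comp
      have heq : (fun x : ℝ => ((x^2 : ℝ) : ℂ)) = fun x : ℝ => ((x:ℂ)^2) := by
        funext y; push_cast; ring
      rw [heq] at this
      convert this using 1
      push_cast; ring
    have := (hx.const_mul (-q)).cexp
    convert this using 1
    push_cast; ring
  have h3 := h1.fun_mul h2
  have heq : (fun x : ℝ => Complex.exp (-q * (x:ℂ)^2))
      = fun x : ℝ => Complex.exp (-q * ((x:ℝ):ℂ)^2) := rfl
  refine h3.congr_deriv ?_
  push_cast; ring

lemma integral_key {q : ℂ} (hq : 0 < q.re) (p : Polynomial ℝ) :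
    ∫ x : ℝ, (((p.derivative.eval x : ℝ) : ℂ) - 2*q*x*((p.eval x : ℝ) : ℂ))
      * Complex.exp (-q * x^2) = 0 := by
  apply integral_hasDerivAt_zero (F := fun x : ℝ => ((p.eval x : ℝ) : ℂ) * Complex.exp (-q * x^2))
  · exact fun x => hasDerivAt_poly_cexp p q x
  · have h1 := integrable_poly_cexp p.derivative hq
    have h2 := (integrable_poly_cexp (Polynomial.X * p) hq).const_mul (-2*q)
    have h3 := h1.add h2
    apply h3.congr
    apply Filter.Eventually.of_forall
    intro x
    simp only [Pi.add_apply, Polynomial.eval_mul, Polynomial.eval_X]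
    push_cast
    ring
  · exact tendsto_poly_cexp_atTop p hq
  · exact tendsto_poly_cexp_atBot p hq

noncomputable def Iq (q : ℂ) (n : ℕ) : ℂ :=
  ∫ x : ℝ, (((PH n).eval x : ℝ) : ℂ) * Complex.exp (-q * x^2)

noncomputable def Jq (q : ℂ) (m : ℕ) : ℂ :=
  ∫ x : ℝ, (((X * PH m : Polynomial ℝ).eval x : ℝ) : ℂ) * Complex.exp (-q * x^2)

lemma lemA {q : ℂ} (hq : 0 < q.re) (m : ℕ) : Iq q (m+1) = 2*(1-q) * Jq q m := by
  have h0 := integral_key hq (PH m)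
  have h1 : ∫ x : ℝ, (2*(1-q)*((((X*PH m : Polynomial ℝ).eval x : ℝ):ℂ)
      * Complex.exp (-q*x^2)) - (((PH (m+1)).eval x : ℝ):ℂ) * Complex.exp (-q*x^2)) = 0 := by
    rw [← h0]
    congr 1
    funext x
    have hr : (PH (m+1)).eval x = 2*x*(PH m).eval x - (PH m).derivative.eval x := by
      simp [PH]
    have hr' : (PH m).derivative.eval x = 2*x*(PH m).eval x - (PH (m+1)).eval x := by
      linarith
    rw [hr']
    simp only [Polynomial.eval_mul, Polynomial.eval_X]
    push_cast
    ring
  rw [integral_sub ((integrable_poly_cexp (X * PH m) hq).const_mul (2*(1-q)))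
    (integrable_poly_cexp (PH (m+1)) hq), integral_const_mul] at h1
  unfold Iq Jq
  linear_combination -h1

lemma lemB {q : ℂ} (hq : 0 < q.re) (m : ℕ) :
    2*q*Jq q (m+1) = (2*(m:ℂ)+2) * Iq q m := by
  have h0 := integral_key hq (PH (m+1))
  have h1 : ∫ x : ℝ, ((2*(m:ℂ)+2) * ((((PH m).eval x : ℝ):ℂ) * Complex.exp (-q*x^2))
      - 2*q*((((X*PH (m+1) : Polynomial ℝ).eval x : ℝ):ℂ) * Complex.exp (-q*x^2))) = 0 := by
    rw [← h0]
    congr 1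
    funext x
    rw [PH_derivative]
    simp only [Polynomial.eval_mul, Polynomial.eval_X, Polynomial.eval_C]
    push_cast
    ring
  rw [integral_sub ((integrable_poly_cexp (PH m) hq).const_mul (2*(m:ℂ)+2))
    ((integrable_poly_cexp (X * PH (m+1)) hq).const_mul (2*q)),
    integral_const_mul, integral_const_mul] at h1
  unfold Iq Jq
  linear_combination -h1

lemma lemRec {q : ℂ} (hq : 0 < q.re) (m : ℕ) :
    q * Iq q (m+2) = (1-q) * (2*(m:ℂ)+2) * Iq q m := by
  have hA1 := lemA hq (m+1)
  have hB := lemB hq m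
  calc q * Iq q (m+2) = (1-q) * (2*q*Jq q (m+1)) := by rw [hA1]; ring
    _ = (1-q) * (2*(m:ℂ)+2) * Iq q m := by rw [hB]; ring

lemma lemClosed {q : ℂ} (hq : 0 < q.re) (k : ℕ) :
    q^k * (k.factorial : ℂ) * Iq q (2*k)
      = (1-q)^k * ((2*k).factorial : ℂ) * Iq q 0 := by
  induction k with
  | zero => simp
  | succ k ih =>
    have hr := lemRec hq (2*k)
    push_cast at hr
    have e3 : Iq q (2*(k+1)) = Iq q (2*k+2) := by rw [show 2*(k+1) = 2*k+2 from by ring]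
    have e1 : ((k+1).factorial : ℂ) = ((k:ℂ)+1) * (k.factorial : ℂ) := by
      push_cast [Nat.factorial_succ]; ring
    have e2 : ((2*(k+1)).factorial : ℂ) = (2*(k:ℂ)+2) * (2*(k:ℂ)+1) * ((2*k).factorial : ℂ) := by
      rw [show 2*(k+1) = (2*k+1)+1 from by ring, Nat.factorial_succ, Nat.factorial_succ]
      push_cast
      ring
    rw [e3, e1, e2, pow_succ, pow_succ]
    linear_combination (q^k * ((k:ℂ)+1) * (k.factorial:ℂ)) * hr
      + ((1-q) * ((k:ℂ)+1) * (2*(2*(k:ℂ))+2)) * ih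

lemma lemI0_ne {q : ℂ} (hq : 0 < q.re) : Iq q 0 ≠ 0 := by
  have hq0 : q ≠ 0 := by
    intro h
    rw [h] at hq
    simp at hq
  have : Iq q 0 = (↑Real.pi / q) ^ (1/2 : ℂ) := by
    unfold Iq
    simp only [PH, Polynomial.eval_one, Complex.ofReal_one, one_mul]
    exact integral_gaussian_complex hq
  rw [this]
  rw [Ne, Complex.cpow_eq_zero_iff]
  push_neg
  intro h
  exact absurd h (div_ne_zero (by exact_mod_cast Real.pi_ne_zero) hq0)

lemma u_rec (k : ℕ) : ((Nat.centralBinom (k+1) : ℝ)/4^(k+1)) * (2*(k:ℝ)+2)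
    = ((Nat.centralBinom k : ℝ)/4^k) * (2*(k:ℝ)+1) := by
  have h' : ((k:ℝ)+1) * (Nat.centralBinom (k+1) : ℝ)
      = 2*(2*(k:ℝ)+1) * (Nat.centralBinom k : ℝ) := by
    exact_mod_cast Nat.succ_mul_centralBinom_succ k
  rw [div_mul_eq_mul_div, div_mul_eq_mul_div, div_eq_div_iff (by positivity) (by positivity),
    pow_succ]
  linear_combination ((4:ℝ)^k*2) * h'

lemma u_sq_rec (k : ℕ) : ((Nat.centralBinom (k+1) : ℝ)/4^(k+1))^2 * (2*(k:ℝ)+2)^2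
    = ((Nat.centralBinom k : ℝ)/4^k)^2 * (2*(k:ℝ)+1)^2 := by
  have h2 : (((Nat.centralBinom (k+1) : ℝ)/4^(k+1)) * (2*(k:ℝ)+2))^2
      = (((Nat.centralBinom k : ℝ)/4^k) * (2*(k:ℝ)+1))^2 := by rw [u_rec]
  linear_combination h2

lemma centralBinom_one_real : ((Nat.centralBinom 1 : ℕ) : ℝ) = 2 := by
  norm_num [Nat.centralBinom, Nat.choose]

lemma u_lower (k : ℕ) (hk : 1 ≤ k) :
    1 ≤ 4*(k:ℝ)*((Nat.centralBinom k : ℝ)/4^k)^2 := by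
  induction k, hk using Nat.le_induction with
  | base => rw [centralBinom_one_real]; norm_num
  | succ k hk ih =>
    have hsq := u_sq_rec k
    have hk1 : (1:ℝ) ≤ (k:ℝ) := by exact_mod_cast hk
    set u : ℝ := ((Nat.centralBinom k : ℝ)/4^k) with hu
    set v : ℝ := ((Nat.centralBinom (k+1) : ℝ)/4^(k+1)) with hv
    have hstep : ((k:ℝ))*(2*(k:ℝ)+2)^2 ≤ ((k:ℝ)+1)*(2*(k:ℝ)+1)^2 := by nlinarith
    have h5 := mul_le_mul_of_nonneg_left ih
      (show (0:ℝ) ≤ ((k:ℝ)+1)*(2*(k:ℝ)+1)^2 by positivity)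
    have e1 : (k:ℝ)*(2*(k:ℝ)+2)^2 * (4*((k:ℝ)+1)*v^2)
        = ((k:ℝ)+1)*(2*(k:ℝ)+1)^2*(4*(k:ℝ)*u^2) := by
      linear_combination (4*(k:ℝ)*((k:ℝ)+1))*hsq
    have hfin : (k:ℝ)*(2*(k:ℝ)+2)^2 * 1 ≤ (k:ℝ)*(2*(k:ℝ)+2)^2 * (4*((k:ℝ)+1)*v^2) := by
      rw [e1]; nlinarith [hstep, h5]
    have := le_of_mul_le_mul_left
      (by linarith [hfin] : (k:ℝ)*(2*(k:ℝ)+2)^2 * 1 ≤ (k:ℝ)*(2*(k:ℝ)+2)^2 * (4*((k:ℝ)+1)*v^2))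
      (show (0:ℝ) < (k:ℝ)*(2*(k:ℝ)+2)^2 by positivity)
    push_cast
    linarith [this]

lemma u_upper (k : ℕ) (hk : 1 ≤ k) :
    ((Nat.centralBinom k : ℝ)/4^k)^2 * (8*(k:ℝ)+4) ≤ 3 := by
  induction k, hk using Nat.le_induction with
  | base => rw [centralBinom_one_real]; norm_num
  | succ k hk ih =>
    have hsq := u_sq_rec k
    have hk1 : (1:ℝ) ≤ (k:ℝ) := by exact_mod_cast hk
    set u : ℝ := ((Nat.centralBinom k : ℝ)/4^k) with hu
    set v : ℝ := ((Nat.centralBinom (k+1) : ℝ)/4^(k+1)) with hv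
    have hstep : (2*(k:ℝ)+1)^2*(8*(k:ℝ)+12) ≤ (8*(k:ℝ)+4)*(2*(k:ℝ)+2)^2 := by nlinarith
    have h2 := mul_le_mul_of_nonneg_left hstep (sq_nonneg u)
    have h3 := mul_le_mul_of_nonneg_right ih (sq_nonneg (2*(k:ℝ)+2))
    have e1 : v^2*(8*(k:ℝ)+12)*(2*(k:ℝ)+2)^2 = (u^2*(2*(k:ℝ)+1)^2)*(8*(k:ℝ)+12) := by
      linear_combination (8*(k:ℝ)+12)*hsq
    have hfin : v^2*(8*(k:ℝ)+12)*(2*(k:ℝ)+2)^2 ≤ 3*(2*(k:ℝ)+2)^2 := by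
      rw [e1]; nlinarith [h2, h3]
    have := le_of_mul_le_mul_right
      (by linarith [hfin] : (v^2*(8*(k:ℝ)+12))*(2*(k:ℝ)+2)^2 ≤ 3*(2*(k:ℝ)+2)^2)
      (show (0:ℝ) < (2*(k:ℝ)+2)^2 by positivity)
    push_cast
    linarith [this]

lemma bound_low (k : ℕ) (hk1 : 1 ≤ k) :
    (Real.sqrt (2*(k:ℝ)))⁻¹ ≤ 2*((Nat.centralBinom k : ℝ)/4^k) := by
  have hk0 : (0:ℝ) < (k:ℝ) := by exact_mod_cast Nat.pos_of_ne_zero (by omega)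
  have hul := u_lower k hk1
  set u : ℝ := (Nat.centralBinom k : ℝ)/4^k with hudef
  have hu0 : 0 ≤ u := by rw [hudef]; positivity
  have hN0 : (0:ℝ) < 2*(k:ℝ) := by linarith
  have hsN : 0 < Real.sqrt (2*(k:ℝ)) := Real.sqrt_pos.mpr hN0
  have hsq1 : (2*u*Real.sqrt (2*(k:ℝ)))^2 = 8*(k:ℝ)*u^2 := by
    rw [mul_pow, mul_pow, Real.sq_sqrt hN0.le]
    ring
  have h1 : (1:ℝ) ≤ (2*u*Real.sqrt (2*(k:ℝ)))^2 := by
    rw [hsq1]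
    nlinarith [hul]
  have h2 : (1:ℝ) ≤ 2*u*Real.sqrt (2*(k:ℝ)) := by
    nlinarith [mul_nonneg (mul_nonneg (by norm_num : (0:ℝ) ≤ 2) hu0) hsN.le]
  rw [inv_eq_one_div, div_le_iff₀ hsN]
  linarith

lemma bound_up (k : ℕ) (hk1 : 1 ≤ k) :
    ((Nat.centralBinom k : ℝ)/4^k) ≤ 2*(Real.sqrt (2*(k:ℝ)))⁻¹ := by
  have hk0 : (0:ℝ) < (k:ℝ) := by exact_mod_cast Nat.pos_of_ne_zero (by omega)
  have huu := u_upper k hk1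
  set u : ℝ := (Nat.centralBinom k : ℝ)/4^k with hudef
  have hu0 : 0 ≤ u := by rw [hudef]; positivity
  have hN0 : (0:ℝ) < 2*(k:ℝ) := by linarith
  have hsN : 0 < Real.sqrt (2*(k:ℝ)) := Real.sqrt_pos.mpr hN0
  have hsq1 : (u*Real.sqrt (2*(k:ℝ)))^2 = 2*(k:ℝ)*u^2 := by
    rw [mul_pow, Real.sq_sqrt hN0.le]
    ring
  have h1 : (u*Real.sqrt (2*(k:ℝ)))^2 ≤ 4 := by
    rw [hsq1]
    nlinarith [huu, sq_nonneg u]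
  have h2 : u*Real.sqrt (2*(k:ℝ)) ≤ 2 := by
    nlinarith [mul_nonneg hu0 hsN.le]
  rw [show 2*(Real.sqrt (2*(k:ℝ)))⁻¹ = 2/Real.sqrt (2*(k:ℝ)) from by rw [div_eq_mul_inv],
    le_div_iff₀ hsN]
  linarith


set_option maxHeartbeats 1000000 in
theorem stmt19 (a b : ℝ) (ha : 0 < a) (hb : 0 < b) (hab : a * b < 1)
    (μ ν A τ : ℝ) (hμ : μ = (1 - a) / (1 + a)) (hν : ν = (1 - b) / (1 + b))
    (hA : A = Real.sqrt ((a + b - 2 * a * b) / (a + b + 2 * a * b)))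
    (hτ : τ ∈ Set.Ioo (-(π / 4)) (π / 4))
    (hτs : Real.sin (2 * τ)
      = (ν - μ) / Real.sqrt ((μ + ν - 2 * μ * ν) * (2 - μ - ν)))
    (z : ℂ) (hz : z = Complex.I * A * Complex.exp (-(2 * Complex.I * τ)))
    (f : ℝ → ℂ) (hf : f = fun x : ℝ => Complex.exp (-((1 + z) / (1 - z)) * (x : ℂ) ^ 2 / 2)) :
    (∀ n : ℕ, Odd n → hermiteCoeff f n = 0) ∧
    (∃ c₁ c₂ : ℝ, 0 < c₁ ∧ c₁ ≤ c₂ ∧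
      ∀ n : ℕ, 2 ≤ n → Even n →
        c₁ * (n : ℝ) ^ (-(1 : ℝ) / 4) * A ^ ((n : ℝ) / 2) ≤
            ‖hermiteCoeff f n‖ ∧
          ‖hermiteCoeff f n‖ ≤
            c₂ * (n : ℝ) ^ (-(1 : ℝ) / 4) * A ^ ((n : ℝ) / 2)) ∧
    (∀ n : ℕ, A ^ ((n : ℝ) / 2)
      = ((a + b - 2 * a * b) / (a + b + 2 * a * b)) ^ ((n : ℝ) / 4)) := by
  -- basic positivity
  have hnum : 0 < a + b - 2 * a * b := by
    have hsa := Real.sq_sqrt ha.le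
    have hsb := Real.sq_sqrt hb.le
    have hsa0 : 0 < Real.sqrt a := Real.sqrt_pos.mpr ha
    have hsb0 : 0 < Real.sqrt b := Real.sqrt_pos.mpr hb
    have habs : Real.sqrt a ^ 2 * Real.sqrt b ^ 2 < 1 := by rw [hsa, hsb]; exact hab
    have ht1 : Real.sqrt a * Real.sqrt b < 1 := by nlinarith [mul_pos hsa0 hsb0]
    nlinarith [mul_pos (mul_pos hsa0 hsb0) (show (0:ℝ) < 1 - Real.sqrt a * Real.sqrt b by linarith),
      sq_nonneg (Real.sqrt a - Real.sqrt b)]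
  have hden : 0 < a + b + 2 * a * b := by nlinarith [mul_pos ha hb]
  set B : ℝ := (a + b - 2 * a * b) / (a + b + 2 * a * b) with hBdef
  have hB0 : 0 < B := div_pos hnum hden
  have hB1 : B < 1 := by
    rw [hBdef, div_lt_one hden]
    nlinarith [mul_pos ha hb]
  have hA0 : 0 < A := by rw [hA]; exact Real.sqrt_pos.mpr hB0
  have hA1 : A < 1 := by
    rw [hA]
    calc Real.sqrt B < Real.sqrt 1 := Real.sqrt_lt_sqrt hB0.le hB1
      _ = 1 := Real.sqrt_one
  have hzabs : ‖z‖ = A := by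
    have hre : (-(2 * Complex.I * (τ:ℂ))).re = 0 := by simp
    rw [hz, norm_mul, norm_mul, Complex.norm_I, Complex.norm_real, Complex.norm_exp, hre,
      Real.exp_zero, Real.norm_eq_abs, abs_of_nonneg hA0.le]
    ring
  have hz1 : (1:ℂ) - z ≠ 0 := by
    intro h
    have hz1' : z = 1 := by linear_combination -h
    rw [hz1'] at hzabs
    simp at hzabs
    linarith
  set q : ℂ := ((1:ℂ) - z)⁻¹ with hqdef
  have hqne : q ≠ 0 := inv_ne_zero hz1
  have hqre : 0 < q.re := by
    rw [hqdef, Complex.inv_re]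
    apply div_pos
    · have h1 : ((1:ℂ) - z).re = 1 - z.re := by simp
      rw [h1]
      have h2 := Complex.re_le_norm z
      rw [hzabs] at h2
      linarith
    · exact Complex.normSq_pos.mpr hz1
  have h1mq : 1 - q = -(z * q) := by
    rw [hqdef]
    field_simp
    ring
  -- coefficient formula
  have hcoef : ∀ n : ℕ, hermiteCoeff f n
      = ((Real.sqrt (2 ^ n * n.factorial * Real.sqrt π))⁻¹ : ℝ) * Iq q n := by
    intro n
    have hpt : ∀ x : ℝ, f x * ((hermiteFn n x : ℝ) : ℂ)
        = (((Real.sqrt (2 ^ n * n.factorial * Real.sqrt π))⁻¹ : ℝ) : ℂ)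
          * ((((PH n).eval x : ℝ) : ℂ) * Complex.exp (-q * (x:ℂ)^2)) := by
      intro x
      have hexp : Complex.exp (-((1 + z) / (1 - z)) * (x:ℂ)^2 / 2)
          * Complex.exp (((-(x^2)/2 : ℝ) : ℂ)) = Complex.exp (-q * (x:ℂ)^2) := by
        rw [← Complex.exp_add]
        congr 1
        push_cast
        rw [hqdef]
        field_simp
        ring
      calc f x * ((hermiteFn n x : ℝ) : ℂ)
          = (((Real.sqrt (2 ^ n * n.factorial * Real.sqrt π))⁻¹ : ℝ) : ℂ)
              * ((((PH n).eval x : ℝ) : ℂ)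
                * (Complex.exp (-((1 + z) / (1 - z)) * (x:ℂ)^2 / 2)
                  * Complex.exp (((-(x^2)/2 : ℝ) : ℂ)))) := by
            rw [hf]
            simp only [hermiteFn, physHermite_eq]
            push_cast
            ring
        _ = _ := by rw [hexp]
    unfold hermiteCoeff
    simp_rw [hpt]
    rw [integral_const_mul]
    rfl
  -- odd vanishing
  have hIodd : ∀ n : ℕ, Odd n → Iq q n = 0 := by
    intro n hodd
    have hneg : ∀ x : ℝ, (((PH n).eval (-x) : ℝ) : ℂ) * Complex.exp (-q * ((-x : ℝ):ℂ)^2)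
        = -((((PH n).eval x : ℝ) : ℂ) * Complex.exp (-q * (x:ℂ)^2)) := by
      intro x
      have hp : (PH n).eval (-x) = (-1)^n * (PH n).eval x := by
        have h2 := congrArg (fun p => Polynomial.eval x p) (PH_comp_neg n)
        simpa [Polynomial.eval_comp] using h2
      rw [hp, hodd.neg_one_pow]
      push_cast
      ring_nf
    have h2 := MeasureTheory.integral_neg_eq_self
      (fun y : ℝ => (((PH n).eval y : ℝ) : ℂ) * Complex.exp (-q * (y:ℂ)^2)) volume
    have h3 : (∫ x : ℝ, (((PH n).eval (-x) : ℝ) : ℂ) * Complex.exp (-q * ((-x : ℝ):ℂ)^2))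
        = -Iq q n := by
      simp_rw [hneg]
      rw [integral_neg]
      rfl
    have h4 : Iq q n = -Iq q n := by
      rw [← h3]
      exact h2.symm
    have h5 : (2:ℂ) * Iq q n = 0 := by linear_combination h4
    simpa using h5
  -- constants
  set M : ℝ := (‖Iq q 0‖)^2 / Real.sqrt π with hMdef
  have hI0 : Iq q 0 ≠ 0 := lemI0_ne hqre
  have hI0abs : 0 < ‖Iq q 0‖ := norm_pos_iff.mpr hI0
  have hsqrtpi : 0 < Real.sqrt π := Real.sqrt_pos.mpr Real.pi_pos
  have hM : 0 < M := div_pos (by positivity) hsqrtpi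
  refine ⟨?_, ⟨Real.sqrt (M/2), Real.sqrt (2*M), Real.sqrt_pos.mpr (by linarith), 
    Real.sqrt_le_sqrt (by linarith), ?_⟩, ?_⟩
  · intro n hodd
    rw [hcoef n, hIodd n hodd, mul_zero]
  · intro n hn2 hev
    obtain ⟨k, rfl⟩ := hev
    have hk1 : 1 ≤ k := by omega
    have hk0 : (0:ℝ) < (k:ℝ) := by exact_mod_cast Nat.pos_of_ne_zero (by omega)
    have hkk : k + k = 2*k := by ring
    have hN0 : (0:ℝ) < ((k+k : ℕ) : ℝ) := by push_cast; linarith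
    set N : ℝ := ((k+k : ℕ) : ℝ) with hNdef
    set T : ℝ := N ^ (-(1:ℝ)/4) with hTdef
    have hT0 : 0 ≤ T := Real.rpow_nonneg hN0.le _
    have hsN : 0 < Real.sqrt N := Real.sqrt_pos.mpr hN0
    have hT2 : T^2 = (Real.sqrt N)⁻¹ := by
      rw [hTdef, ← Real.rpow_natCast (N ^ (-(1:ℝ)/4)) 2, ← Real.rpow_mul hN0.le]
      norm_num
      rw [Real.rpow_neg hN0.le, Real.sqrt_eq_rpow]
    have hNval : N = 2*(k:ℝ) := by rw [hNdef]; push_cast; ring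
    have hA2 : A ^ (N/2) = A^k := by
      rw [hNdef, show (((k+k:ℕ)):ℝ)/2 = ((k:ℕ):ℝ) from by push_cast; ring, Real.rpow_natCast]
    set u : ℝ := (Nat.centralBinom k : ℝ)/4^k with hudef
    have hu0 : 0 ≤ u := by rw [hudef]; positivity
    -- |Iq q (2k)| * k! = A^k * (2k)! * |Iq q 0|
    have hIabs : ‖Iq q (2*k)‖ * (k.factorial : ℝ)
        = A^k * ((2*k).factorial : ℝ) * ‖Iq q 0‖ := by
      have hcl := lemClosed hqre k
      rw [h1mq] at hcl
      have habs := congrArg norm hcl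
      simp only [norm_mul, norm_pow, norm_neg, Complex.norm_natCast] at habs
      rw [hzabs] at habs
      have hqa : 0 < ‖q‖ := norm_pos_iff.mpr hqne
      apply mul_left_cancel₀ (pow_ne_zero k hqa.ne')
      linear_combination habs
    have hcabs : ‖hermiteCoeff f (k+k)‖
        = (Real.sqrt (2^(k+k) * (k+k).factorial * Real.sqrt π))⁻¹
          * ‖Iq q (2*k)‖ := by
      rw [hcoef (k+k), norm_mul, Complex.norm_real, Real.norm_eq_abs, abs_of_nonneg (by positivity), hkk]
    have h4k : (4:ℝ)^k = 2^(k+k) := by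
      rw [show (4:ℝ) = 2^2 from by norm_num, ← pow_mul]
      congr 1
      omega
    have hkf : ((k+k).factorial : ℝ) = ((2*k).factorial : ℝ) := by rw [hkk]
    have hfac : (Nat.centralBinom k : ℝ) * (k.factorial:ℝ) * (k.factorial:ℝ)
        = ((2*k).factorial : ℝ) := by
      have h := Nat.choose_mul_factorial_mul_factorial (show k ≤ 2*k by omega)
      rw [show 2*k - k = k from by omega] at h
      have h2 : Nat.centralBinom k = (2*k).choose k := rfl
      rw [h2]
      exact_mod_cast h
    have hsqval : (‖hermiteCoeff f (k+k)‖)^2 = u * M * (A^k)^2 := by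
      have h2 : (‖hermiteCoeff f (k+k)‖ * (k.factorial:ℝ))^2
          = ((Real.sqrt (2^(k+k) * (k+k).factorial * Real.sqrt π))⁻¹)^2
            * (A^k * ((2*k).factorial : ℝ) * ‖Iq q 0‖)^2 := by
        rw [hcabs]
        calc ((Real.sqrt (2^(k+k) * (k+k).factorial * Real.sqrt π))⁻¹
              * ‖Iq q (2*k)‖ * (k.factorial:ℝ))^2
            = ((Real.sqrt (2^(k+k) * (k+k).factorial * Real.sqrt π))⁻¹)^2
              * (‖Iq q (2*k)‖ * (k.factorial:ℝ))^2 := by ring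
          _ = _ := by rw [hIabs]
      have hinv2 : ((Real.sqrt (2^(k+k) * (k+k).factorial * Real.sqrt π))⁻¹)^2
          = ((2:ℝ)^(k+k) * ((k+k).factorial:ℝ) * Real.sqrt π)⁻¹ := by
        rw [inv_pow, Real.sq_sqrt (by positivity)]
      rw [hinv2, hkf, ← h4k] at h2
      have hkf2 : ((k.factorial:ℝ))^2 ≠ 0 :=
        pow_ne_zero _ (Nat.cast_ne_zero.mpr k.factorial_ne_zero)
      apply mul_right_cancel₀ hkf2
      rw [show ‖hermiteCoeff f (k+k)‖^2 * (k.factorial:ℝ)^2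
          = (‖hermiteCoeff f (k+k)‖ * (k.factorial:ℝ))^2 from by ring, h2,
        hudef, hMdef]
      have h4ne : ((4:ℝ)^k) ≠ 0 := by positivity
      have hfne : ((2*k).factorial : ℝ) ≠ 0 := Nat.cast_ne_zero.mpr (2*k).factorial_ne_zero
      field_simp
      linear_combination -hfac
    have hge0 : 0 ≤ ‖hermiteCoeff f (k+k)‖ := norm_nonneg _
    have hc1sq : (Real.sqrt (M/2))^2 = M/2 := Real.sq_sqrt (by linarith)
    have hc2sq : (Real.sqrt (2*M))^2 = 2*M := Real.sq_sqrt (by linarith)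
    constructor
    · -- lower bound
      have hkey : (Real.sqrt N)⁻¹ ≤ 2*u := by
        rw [hNval, hudef]
        exact bound_low k hk1
      have hlow2 : (Real.sqrt (M/2) * T * A ^ (N/2))^2
          ≤ (‖hermiteCoeff f (k+k)‖)^2 := by
        rw [hA2, hsqval]
        have expand : (Real.sqrt (M/2)*T*A^k)^2 = (M/2) * (Real.sqrt N)⁻¹ * (A^k)^2 := by
          rw [mul_pow, mul_pow, hc1sq, hT2]
        rw [expand]
        have hstep : (M/2) * (Real.sqrt N)⁻¹ ≤ u * M := by
          have h := mul_le_mul_of_nonneg_left hkey (show (0:ℝ) ≤ M/2 by linarith only [hM])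
          linarith only [h]
        exact mul_le_mul_of_nonneg_right hstep (sq_nonneg _)
      have hX0 : 0 ≤ Real.sqrt (M/2) * T * A ^ (N/2) :=
        mul_nonneg (mul_nonneg (Real.sqrt_nonneg _) hT0) (Real.rpow_nonneg hA0.le _)
      rw [← Real.sqrt_sq hX0, ← Real.sqrt_sq hge0]
      exact Real.sqrt_le_sqrt hlow2
    · -- upper bound
      have hkey : u ≤ 2*(Real.sqrt N)⁻¹ := by
        rw [hNval, hudef]
        exact bound_up k hk1
      have hup2 : (‖hermiteCoeff f (k+k)‖)^2
          ≤ (Real.sqrt (2*M) * T * A ^ (N/2))^2 := by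
        rw [hA2, hsqval]
        have expand : (Real.sqrt (2*M)*T*A^k)^2 = (2*M) * (Real.sqrt N)⁻¹ * (A^k)^2 := by
          rw [mul_pow, mul_pow, hc2sq, hT2]
        rw [expand]
        have hstep : u * M ≤ (2*M) * (Real.sqrt N)⁻¹ := by
          have h := mul_le_mul_of_nonneg_left hkey (le_of_lt hM)
          linarith only [h]
        exact mul_le_mul_of_nonneg_right hstep (sq_nonneg _)
      have hY0 : 0 ≤ Real.sqrt (2*M) * T * A ^ (N/2) :=
        mul_nonneg (mul_nonneg (Real.sqrt_nonneg _) hT0) (Real.rpow_nonneg hA0.le _)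
      rw [← Real.sqrt_sq hge0, ← Real.sqrt_sq hY0]
      exact Real.sqrt_le_sqrt hup2
  · intro n
    rw [hA, Real.sqrt_eq_rpow, ← Real.rpow_mul hB0.le]
    congr 1
    ring
end
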